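/- arXiv:2207.04143 — 6 statements merged into one kernel-verified Lean document; each statement's English description precedes it below -/
import Mathlib

section
/- For all x ≥ 0 and λ ≥ 0, with probability at least 1 − e^{−x} it holds simultaneously for all n ∈ ℕ that Σ_{i=1}^n λ Z_i ≤ x + Σ_{i=1}^n ( λ μ_i + ψ_i(λ) ). -/
open MeasureTheory Finset

open scoped NNReal ENNReal


lemma condexp_line_le {Ω : Type*} {m m0 : MeasurableSpace Ω} (hm : m ≤ m0)
    {μ : Measure Ω} [IsProbabilityMeasure μ]
    (φ dφ : ℝ → ℝ) (hφc : Continuous φ) (hdc : Continuous dφ)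
    (hline : ∀ q x : ℝ, φ q + dφ q * (x - q) ≤ φ x)
    {f : Ω → ℝ} (hf : Integrable f μ) (hφf : Integrable (fun ω => φ (f ω)) μ) :
    ∀ᵐ ω ∂μ, φ ((μ[f|m]) ω) ≤ (μ[fun ω => φ (f ω)|m]) ω := by
  have h1 : ∀ q : ℚ, ∀ᵐ ω ∂μ, φ q + dφ q * ((μ[f|m]) ω - q) ≤ (μ[fun ω => φ (f ω)|m]) ω := by
    intro q
    have hint : Integrable (fun ω => φ q + dφ q * (f ω - q)) μ :=
      (integrable_const _).add ((hf.sub (integrable_const _)).const_mul _)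
    have h := condExp_mono (μ := μ) (m := m) hint hφf
      (Filter.Eventually.of_forall fun ω => hline (q : ℝ) (f ω))
    have heq : μ[fun ω => φ q + dφ q * (f ω - q)|m]
        =ᵐ[μ] fun ω => φ q + dφ q * ((μ[f|m]) ω - q) := by
      have h2 : μ[fun ω => dφ q * (f ω - q)|m] =ᵐ[μ] fun ω => dφ q * ((μ[f|m]) ω - q) := by
        have : μ[fun ω => f ω - q|m] =ᵐ[μ] fun ω => (μ[f|m]) ω - q :=
          (condExp_sub hf (integrable_const _) m).trans <| by
            rw [condExp_const (μ := μ) hm (q:ℝ)]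
            exact Filter.Eventually.of_forall fun ω => rfl
        exact (condExp_smul (μ := μ) (m := m) (dφ q) (fun ω => f ω - q)).trans <| by
          filter_upwards [this] with ω hw; simp [hw]
      exact (condExp_add (integrable_const _) ((hf.sub (integrable_const _)).const_mul _) m).trans <| by
        rw [condExp_const (μ := μ) hm (φ (q:ℝ))]
        filter_upwards [h2] with ω h2
        simp [h2]
    filter_upwards [h, heq] with ω h heq
    rw [← heq]; exact h
  rw [← ae_all_iff] at h1
  filter_upwards [h1] with ω h1
  set c := (μ[f|m]) ω
  set D := (μ[fun ω => φ (f ω)|m]) ω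
  have hclosed : IsClosed {t : ℝ | φ t + dφ t * (c - t) ≤ D} :=
    isClosed_le (by fun_prop) continuous_const
  have hall : ∀ t : ℝ, φ t + dφ t * (c - t) ≤ D := by
    intro t
    have := Rat.denseRange_cast (𝕜 := ℝ) t
    have hsub : closure (Set.range ((↑) : ℚ → ℝ)) ⊆ {t : ℝ | φ t + dφ t * (c - t) ≤ D} :=
      hclosed.closure_subset_iff.mpr (by rintro _ ⟨q, rfl⟩; exact h1 q)
    exact hsub this
  simpa using hall c


lemma integrable_mul_of_trunc {Ω : Type*} {m0 : MeasurableSpace Ω} {μ : Measure Ω}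
    [IsProbabilityMeasure μ] {u v : Ω → ℝ} (hu : ∀ ω, 0 ≤ u ω) (hv : ∀ ω, 0 ≤ v ω)
    (hint : ∀ k : ℕ, Integrable (fun ω => u ω * min (v ω) k) μ)
    (hmeas : AEStronglyMeasurable (fun ω => u ω * v ω) μ)
    {C : ℝ} (hC : ∀ k : ℕ, ∫ ω, u ω * min (v ω) k ∂μ ≤ C) :
    Integrable (fun ω => u ω * v ω) μ ∧ ∫ ω, u ω * v ω ∂μ ≤ C := by
  have hnonneg : ∀ k : ℕ, ∀ ω, 0 ≤ u ω * min (v ω) k := fun k ω =>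
    mul_nonneg (hu ω) (le_min (hv ω) (Nat.cast_nonneg k))
  have hmono : ∀ ω, Monotone fun k : ℕ => ENNReal.ofReal (u ω * min (v ω) k) := by
    intro ω i j hij
    exact ENNReal.ofReal_le_ofReal (mul_le_mul_of_nonneg_left
      (min_le_min le_rfl (Nat.cast_le.mpr hij)) (hu ω))
  have hsup : ∀ ω, (⨆ k : ℕ, ENNReal.ofReal (u ω * min (v ω) k))
      = ENNReal.ofReal (u ω * v ω) := by
    intro ω
    refine le_antisymm (iSup_le fun k => ENNReal.ofReal_le_ofReal
      (mul_le_mul_of_nonneg_left (min_le_left _ _) (hu ω))) ?_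
    refine le_iSup_of_le ⌈v ω⌉₊ (le_of_eq ?_)
    rw [min_eq_left (Nat.le_ceil _)]
  have hlin : ∫⁻ ω, ENNReal.ofReal (u ω * v ω) ∂μ
      = ⨆ k : ℕ, ∫⁻ ω, ENNReal.ofReal (u ω * min (v ω) k) ∂μ := by
    rw [← lintegral_iSup' (fun k => ((hint k).aestronglyMeasurable.aemeasurable).ennreal_ofReal)
      (Filter.Eventually.of_forall hmono)]
    exact lintegral_congr fun ω => (hsup ω).symm
  have hle : ∫⁻ ω, ENNReal.ofReal (u ω * v ω) ∂μ ≤ ENNReal.ofReal C := by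
    rw [hlin]
    refine iSup_le fun k => ?_
    rw [← ofReal_integral_eq_lintegral_ofReal (hint k)
      (Filter.Eventually.of_forall (hnonneg k))]
    exact ENNReal.ofReal_le_ofReal (hC k)
  have hfin : ∫⁻ ω, ENNReal.ofReal (u ω * v ω) ∂μ < ⊤ :=
    lt_of_le_of_lt hle ENNReal.ofReal_lt_top
  have hInt : Integrable (fun ω => u ω * v ω) μ := by
    refine ⟨hmeas, ?_⟩
    rw [hasFiniteIntegral_iff_ofReal (Filter.Eventually.of_forall
      fun ω => mul_nonneg (hu ω) (hv ω))]
    exact hfin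
  refine ⟨hInt, ?_⟩
  rw [integral_eq_lintegral_of_nonneg_ae (Filter.Eventually.of_forall
    fun ω => mul_nonneg (hu ω) (hv ω)) hmeas]
  calc (∫⁻ ω, ENNReal.ofReal (u ω * v ω) ∂μ).toReal
      ≤ (ENNReal.ofReal C).toReal := ENNReal.toReal_mono ENNReal.ofReal_ne_top hle
    _ ≤ C := by
        have hC0 : 0 ≤ C := le_trans (integral_nonneg (hnonneg 0)) (hC 0)
        rw [ENNReal.toReal_ofReal hC0]

lemma condexp_pos_ae {Ω : Type*} {m m0 : MeasurableSpace Ω} (hm : m ≤ m0) {μ : Measure Ω}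
    [IsProbabilityMeasure μ] {f : Ω → ℝ} (hf : Integrable f μ) (hpos : ∀ ω, 0 < f ω) :
    ∀ᵐ ω ∂μ, 0 < (μ[f|m]) ω := by
  set A := {ω | (μ[f|m]) ω ≤ 0} with hA
  have hAm : MeasurableSet[m] A :=
    measurableSet_le stronglyMeasurable_condExp.measurable measurable_const
  have hAm0 : MeasurableSet A := hm _ hAm
  have h1 : ∫ ω in A, f ω ∂μ = ∫ ω in A, (μ[f|m]) ω ∂μ := (setIntegral_condExp hm hf hAm).symm
  have h2 : ∫ ω in A, (μ[f|m]) ω ∂μ ≤ 0 := by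
    refine integral_nonpos_of_ae ?_
    refine (ae_restrict_iff' hAm0).mpr (Filter.Eventually.of_forall fun ω hω => hω)
  have hA0 : μ A = 0 := by
    by_contra h
    have hpos' : 0 < ∫ ω in A, f ω ∂μ := by
      rw [setIntegral_pos_iff_support_of_nonneg_ae
        (Filter.Eventually.of_forall fun ω => (hpos ω).le) hf.integrableOn]
      have : Function.support f ∩ A = A := by
        ext ω; simp [Function.support, (hpos ω).ne']
      rw [this]
      exact lt_of_le_of_ne zero_le (Ne.symm h)
    linarith [h1 ▸ hpos']
  have hnm : ∀ᵐ ω ∂μ, ω ∉ A := measure_eq_zero_iff_ae_notMem.mp hA0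
  filter_upwards [hnm] with ω hω
  simpa [A, not_le] using hω

lemma key_tower {Ω : Type*} {m m0 : MeasurableSpace Ω} (hm : m ≤ m0) {μ : Measure Ω}
    [IsProbabilityMeasure μ] {u g B : Ω → ℝ}
    (hu : Integrable u μ) (hupos : ∀ ω, 0 ≤ u ω)
    (hg : StronglyMeasurable[m] g) (hgpos : ∀ ω, 0 ≤ g ω)
    (hB : Integrable B μ) (hbound : ∀ᵐ ω ∂μ, g ω * (μ[u|m]) ω ≤ B ω)
    {C : ℝ} (hCB : ∫ ω, B ω ∂μ ≤ C) :
    Integrable (fun ω => u ω * g ω) μ ∧ ∫ ω, u ω * g ω ∂μ ≤ C := by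
  have hcondnn : 0 ≤ᵐ[μ] μ[u|m] := condExp_nonneg (Filter.Eventually.of_forall hupos)
  have hgk_meas : ∀ k : ℕ, StronglyMeasurable[m] (fun ω => min (g ω) (k : ℝ)) := fun k =>
    (hg.measurable.min measurable_const).stronglyMeasurable
  have hgk_bdd : ∀ (k : ℕ) ω, ‖min (g ω) (k : ℝ)‖ ≤ (k : ℝ) := by
    intro k ω
    rw [Real.norm_eq_abs, abs_of_nonneg (le_min (hgpos ω) (Nat.cast_nonneg k))]
    exact min_le_right _ _
  have hint : ∀ k : ℕ, Integrable (fun ω => min (g ω) (k : ℝ) * u ω) μ := fun k =>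
    hu.bdd_mul ((hgk_meas k).mono hm).aestronglyMeasurable (Filter.Eventually.of_forall (hgk_bdd k))
  have hint' : ∀ k : ℕ, Integrable (fun ω => u ω * min (g ω) (k : ℝ)) μ := fun k =>
    (hint k).congr (Filter.Eventually.of_forall fun ω => mul_comm _ _)
  have hC : ∀ k : ℕ, ∫ ω, u ω * min (g ω) (k : ℝ) ∂μ ≤ C := by
    intro k
    have hpull := condExp_mul_of_stronglyMeasurable_left (μ := μ) (hgk_meas k)
      (show Integrable ((fun ω => min (g ω) (k : ℝ)) * u) μ from hint k) hu
    have hgkc_int : Integrable (fun ω => min (g ω) (k : ℝ) * (μ[u|m]) ω) μ :=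
      integrable_condExp.bdd_mul ((hgk_meas k).mono hm).aestronglyMeasurable (Filter.Eventually.of_forall (hgk_bdd k))
    calc ∫ ω, u ω * min (g ω) (k : ℝ) ∂μ
        = ∫ ω, min (g ω) (k : ℝ) * u ω ∂μ :=
          integral_congr_ae (Filter.Eventually.of_forall fun ω => mul_comm _ _)
      _ = ∫ ω, (μ[(fun ω => min (g ω) (k : ℝ)) * u|m]) ω ∂μ := (integral_condExp hm).symm
      _ = ∫ ω, min (g ω) (k : ℝ) * (μ[u|m]) ω ∂μ := integral_congr_ae (by
          filter_upwards [hpull] with ω hω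
          exact hω)
      _ ≤ ∫ ω, B ω ∂μ := by
          refine integral_mono_ae hgkc_int hB ?_
          filter_upwards [hbound, hcondnn] with ω h1 h2
          exact le_trans (mul_le_mul_of_nonneg_right (min_le_left _ _) h2) h1
      _ ≤ C := hCB
  exact integrable_mul_of_trunc hupos hgpos hint'
    (hu.aestronglyMeasurable.mul (hg.mono hm).aestronglyMeasurable) hC
open MeasureTheory Finset
open scoped NNReal ENNReal

lemma supermartingale_maximal {Ω : Type*} {m0 : MeasurableSpace Ω} {μ : Measure Ω}
    [IsProbabilityMeasure μ] {𝒢 : Filtration ℕ m0} {f : ℕ → Ω → ℝ}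
    (hsup : Supermartingale f 𝒢 μ) (hnonneg : ∀ i ω, 0 ≤ f i ω) {ε : ℝ≥0} (n : ℕ) :
    ε • μ {ω | (ε : ℝ) ≤ (range (n + 1)).sup' nonempty_range_add_one fun k => f k ω} ≤
      ENNReal.ofReal (∫ ω, f 0 ω ∂μ) := by
  set τ : Ω → ℕ∞ := fun ω => (hittingBtwn f {y : ℝ | ↑ε ≤ y} 0 n ω : ℕ) with hτdef
  have hτ : IsStoppingTime 𝒢 τ :=
    Adapted.isStoppingTime_hittingBtwn hsup.stronglyAdapted.adapted measurableSet_Ici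
  have hτle : ∀ ω, τ ω ≤ n := fun ω => by
    simp only [τ, Nat.cast_le]; exact hittingBtwn_le ω
  have hSVint : Integrable (stoppedValue f τ) μ :=
    integrable_stoppedValue ℕ hτ hsup.integrable hτle
  have hn : Set.Icc 0 n = {k | k ≤ n} := by ext x; simp
  have hAmeas : MeasurableSet {ω | (ε : ℝ) ≤ (range (n + 1)).sup' nonempty_range_add_one
      fun k => f k ω} :=
    measurableSet_le measurable_const (Finset.measurable_range_sup'' fun k _ =>
      (hsup.stronglyMeasurable k).measurable.le (𝒢.le k))
  have hSV : ∀ ω, ((ε : ℝ) ≤ (range (n + 1)).sup' nonempty_range_add_one fun k => f k ω) →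
      (ε : ℝ) ≤ stoppedValue f τ ω := by
    intro ω hω
    simp_rw [le_sup'_iff, mem_range, Nat.lt_succ_iff] at hω
    refine stoppedValue_hittingBtwn_mem ?_
    simp only [Set.mem_setOf_eq, exists_prop, hn]
    exact let ⟨j, hj₁, hj₂⟩ := hω; ⟨j, hj₁, hj₂⟩
  have h1 : (ε : ℝ) * (μ {ω | (ε : ℝ) ≤ (range (n + 1)).sup' nonempty_range_add_one
      fun k => f k ω}).toReal ≤ ∫ ω in {ω | (ε : ℝ) ≤ (range (n + 1)).sup' nonempty_range_add_one
      fun k => f k ω}, stoppedValue f τ ω ∂μ :=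
    by have h := setIntegral_ge_of_const_le hAmeas (measure_ne_top _ _) hSV hSVint.integrableOn
       rw [smul_eq_mul, mul_comm] at h; exact h
  have h2 : ∫ ω in {ω | (ε : ℝ) ≤ (range (n + 1)).sup' nonempty_range_add_one
      fun k => f k ω}, stoppedValue f τ ω ∂μ ≤ ∫ ω, stoppedValue f τ ω ∂μ := by
    refine setIntegral_le_integral hSVint (Filter.Eventually.of_forall fun ω => ?_)
    exact hnonneg _ _
  have h3 : ∫ ω, stoppedValue f τ ω ∂μ ≤ ∫ ω, f 0 ω ∂μ := by
    have hneg := hsup.neg.expected_stoppedValue_mono (isStoppingTime_const 𝒢 (0 : ℕ)) hτ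
      (fun ω => by simp only [Nat.cast_zero]; exact zero_le) hτle
    rw [stoppedValue_const] at hneg
    have he : ∫ x, stoppedValue (-f) τ x ∂μ = - ∫ x, stoppedValue f τ x ∂μ := by
      rw [← integral_neg]
      exact integral_congr_ae (Filter.Eventually.of_forall fun ω => rfl)
    have he2 : ∫ x, (-f) 0 x ∂μ = - ∫ x, f 0 x ∂μ := by
      rw [← integral_neg]
      exact integral_congr_ae (Filter.Eventually.of_forall fun ω => rfl)
    rw [he, he2] at hneg
    linarith
  rw [ENNReal.le_ofReal_iff_toReal_le, ENNReal.toReal_smul]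
  · exact le_trans h1 (le_trans h2 h3)
  · exact ENNReal.mul_ne_top (by simp) (measure_ne_top _ _)
  · exact le_trans (mul_nonneg ε.coe_nonneg ENNReal.toReal_nonneg)
      (le_trans h1 (le_trans h2 h3))

/-- Lemma 2 of the paper (martingale exponential inequality): for all `x ≥ 0` and `λ ≥ 0`,
with probability at least `1 − e^{−x}`, simultaneously for all `n ∈ ℕ`,
`Σ_{i=1}^n λ Z_i ≤ x + Σ_{i=1}^n ( λ μ_i + ψ_i(λ) )`, where `μ_i = E[Z_i | H_{i−1}]` and
`ψ_i(λ) = log E[exp(λ(Z_i − μ_i)) | H_{i−1}]`. -/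
theorem martingale_exponential_inequality
    {Ω : Type*} {m0 : MeasurableSpace Ω} {μ : Measure Ω} [IsProbabilityMeasure μ]
    (ℱ : Filtration ℕ m0) (hℱ0 : ℱ 0 = ⊥)
    (Z : ℕ → Ω → ℝ)
    (hZmeas : ∀ n, 1 ≤ n → Measurable[ℱ n] (Z n))
    (hZexp : ∀ (l : ℝ) (n : ℕ), Integrable (fun ω => Real.exp (l * Z n ω)) μ)
    -- conditional means  μ_n = E[Z_n | H_{n−1}]
    (μZ : ℕ → Ω → ℝ) (hμZ : ∀ n, μZ n = μ[Z n | ℱ (n - 1)])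
    -- conditional cumulant generating functions  ψ_n(λ) = log E[exp(λ(Z_n − μ_n)) | H_{n−1}]
    (ψ : ℕ → ℝ → Ω → ℝ)
    (hψ : ∀ n (l : ℝ), ψ n l = fun ω =>
      Real.log ((μ[fun ω' => Real.exp (l * (Z n ω' - μZ n ω')) | ℱ (n - 1)]) ω))
    (x l : ℝ) (hx : 0 ≤ x) (hl : 0 ≤ l) :
    ENNReal.ofReal (1 - Real.exp (-x)) ≤
      μ {ω | ∀ n : ℕ,
        ∑ i ∈ Finset.Icc 1 n, l * Z i ω ≤
          x + ∑ i ∈ Finset.Icc 1 n, (l * μZ i ω + ψ i l ω)} := by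
  classical
  -- Z n is integrable
  have hZint : ∀ n, Integrable (Z n) μ := by
    intro n
    have hmeas : AEStronglyMeasurable (Z n) μ := by
      have h1 : AEMeasurable (fun ω => Real.exp (1 * Z n ω)) μ :=
        (hZexp 1 n).aestronglyMeasurable.aemeasurable
      have h2 : AEMeasurable (fun ω => Real.log (Real.exp (1 * Z n ω))) μ :=
        Real.measurable_log.comp_aemeasurable h1
      simpa [Real.log_exp] using h2.aestronglyMeasurable
    refine ((hZexp 1 n).add (hZexp (-1) n)).mono hmeas ?_
    refine Filter.Eventually.of_forall fun ω => ?_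
    simp only [Pi.add_apply, Real.norm_eq_abs, one_mul, neg_one_mul]
    rw [abs_of_nonneg (by positivity : (0:ℝ) ≤ Real.exp (Z n ω) + Real.exp (-Z n ω))]
    rcases abs_cases (Z n ω) with ⟨h, _⟩ | ⟨h, _⟩ <;> rw [h] <;>
      nlinarith [Real.add_one_le_exp (Z n ω), Real.add_one_le_exp (-Z n ω),
        Real.exp_pos (Z n ω), Real.exp_pos (-Z n ω)]
  have hμZint : ∀ n, Integrable (μZ n) μ := fun n => by rw [hμZ]; exact integrable_condExp
  have hμZm : ∀ n, StronglyMeasurable[ℱ (n - 1)] (μZ n) := fun n => by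
    rw [hμZ]; exact stronglyMeasurable_condExp
  -- conditional Jensen applications
  have hJexp : ∀ (c : ℝ) (n : ℕ), ∀ᵐ ω ∂μ,
      Real.exp (c * μZ n ω) ≤ (μ[fun ω' => Real.exp (c * Z n ω')|ℱ (n - 1)]) ω := by
    intro c n
    have hline : ∀ q x' : ℝ, Real.exp (c * q) + c * Real.exp (c * q) * (x' - q)
        ≤ Real.exp (c * x') := by
      intro q x'
      have h := Real.add_one_le_exp (c * x' - c * q)
      have hp := (Real.exp_pos (c * q)).le
      have h2 : Real.exp (c * q) * Real.exp (c * x' - c * q) = Real.exp (c * x') := by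
        rw [← Real.exp_add]; ring_nf
      nlinarith [mul_le_mul_of_nonneg_left h hp]
    have := condexp_line_le (ℱ.le (n - 1)) (fun t => Real.exp (c * t))
      (fun t => c * Real.exp (c * t)) (by fun_prop) (by fun_prop) hline (hZint n) (hZexp c n)
    rw [hμZ]
    exact this
  have hJsq : ∀ (c : ℝ) (n : ℕ), ∀ᵐ ω ∂μ,
      ((μ[fun ω' => Real.exp (c * Z n ω')|ℱ (n - 1)]) ω) ^ 2
        ≤ (μ[fun ω' => Real.exp (c * Z n ω') ^ 2|ℱ (n - 1)]) ω := by
    intro c n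
    refine condexp_line_le (ℱ.le (n - 1)) (fun t => t ^ 2) (fun t => 2 * t)
      (by fun_prop) (by fun_prop) (fun q x' => by show q ^ 2 + 2 * q * (x' - q) ≤ x' ^ 2; nlinarith [sq_nonneg (x' - q)])
      (hZexp c n) ?_
    have : (fun ω => Real.exp (c * Z n ω) ^ 2) = fun ω => Real.exp (2 * c * Z n ω) := by
      funext ω; rw [sq, ← Real.exp_add]; ring_nf
    rw [this]; exact hZexp _ n
  -- integrability of Y n := exp (l * (Z n - μZ n))
  have hYint : ∀ n, Integrable (fun ω => Real.exp (l * (Z n ω - μZ n ω))) μ := by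
    intro n
    set B : Ω → ℝ := fun ω =>
      (1 / 2) * ((μ[fun ω' => Real.exp (-l * Z n ω') ^ 2|ℱ (n - 1)]) ω
        + (μ[fun ω' => Real.exp (l * Z n ω') ^ 2|ℱ (n - 1)]) ω) with hBdef
    have hBint : Integrable B μ := (integrable_condExp.add integrable_condExp).const_mul _
    have hcondnn : 0 ≤ᵐ[μ] μ[fun ω' => Real.exp (-l * Z n ω')|ℱ (n - 1)] :=
      condExp_nonneg (Filter.Eventually.of_forall fun ω => (Real.exp_pos _).le)
    have hbound : ∀ᵐ ω ∂μ, Real.exp (-l * μZ n ω)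
        * (μ[fun ω' => Real.exp (l * Z n ω')|ℱ (n - 1)]) ω ≤ B ω := by
      filter_upwards [hJexp (-l) n, hJsq (-l) n, hJsq l n, hcondnn,
        condExp_nonneg (μ := μ) (m := ℱ (n - 1))
          (Filter.Eventually.of_forall fun ω => (Real.exp_pos (l * Z n ω)).le)] with
        ω h1 h2 h3 h4 h5
      set a := (μ[fun ω' => Real.exp (-l * Z n ω')|ℱ (n - 1)]) ω
      set b := (μ[fun ω' => Real.exp (l * Z n ω')|ℱ (n - 1)]) ω
      have hg : Real.exp (-l * μZ n ω) * b ≤ a * b := mul_le_mul_of_nonneg_right h1 h5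
      have hab : a * b ≤ (1 / 2) * (a ^ 2 + b ^ 2) := by nlinarith [sq_nonneg (a - b)]
      rw [hBdef]
      dsimp only
      nlinarith
    have hgm : StronglyMeasurable[ℱ (n - 1)] (fun ω => Real.exp (-l * μZ n ω)) :=
      (Real.measurable_exp.comp ((hμZm n).measurable.const_mul (-l))).stronglyMeasurable
    have hkey := key_tower (ℱ.le (n - 1)) (hZexp l n)
      (fun ω => (Real.exp_pos _).le) hgm (fun ω => (Real.exp_pos _).le) hBint hbound le_rfl
    refine hkey.1.congr (Filter.Eventually.of_forall fun ω => ?_)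
    show Real.exp (l * Z n ω) * Real.exp (-l * μZ n ω) = Real.exp (l * (Z n ω - μZ n ω))
    rw [← Real.exp_add]; ring_nf
  -- the exponential supermartingale
  set ξ : ℕ → Ω → ℝ := fun n ω => l * (Z n ω - μZ n ω) - ψ n l ω with hξdef
  set M : ℕ → Ω → ℝ := fun n ω => Real.exp (∑ i ∈ Finset.Icc 1 n, ξ i ω) with hMdef
  have hψmeas : ∀ i, Measurable[ℱ (i - 1)] (ψ i l) := by
    intro i
    rw [hψ]
    exact Real.measurable_log.comp stronglyMeasurable_condExp.measurable
  have hξmeas : ∀ i n, 1 ≤ i → i ≤ n → Measurable[ℱ n] (ξ i) := by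
    intro i n h1 h2
    have hZm : Measurable[ℱ n] (Z i) := (hZmeas i h1).mono (ℱ.mono h2) le_rfl
    have hμZm' : Measurable[ℱ n] (μZ i) :=
      (hμZm i).measurable.mono (ℱ.mono (le_trans (Nat.sub_le i 1) h2)) le_rfl
    have hψm' : Measurable[ℱ n] (ψ i l) :=
      (hψmeas i).mono (ℱ.mono (le_trans (Nat.sub_le i 1) h2)) le_rfl
    exact ((measurable_const.mul (hZm.sub hμZm')).sub hψm')
  have hMadp : StronglyAdapted ℱ M := by
    intro n
    refine (Real.measurable_exp.comp ?_).stronglyMeasurable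
    refine Finset.measurable_sum _ fun i hi => ?_
    rw [Finset.mem_Icc] at hi
    exact hξmeas i n hi.1 hi.2
  have hMpos : ∀ n ω, 0 < M n ω := fun n ω => Real.exp_pos _
  have hM0 : M 0 = fun _ => (1 : ℝ) := by
    funext ω
    rw [hMdef]
    simp
  -- ψ at successor indices: exp (ψ (n+1) l) = condexp of Y (n+1)    a.e.
  have hψeq : ∀ n : ℕ, ∀ᵐ ω ∂μ, Real.exp (ψ (n + 1) l ω)
      = (μ[fun ω' => Real.exp (l * (Z (n + 1) ω' - μZ (n + 1) ω'))|ℱ n]) ω := by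
    intro n
    have hpos : ∀ᵐ ω ∂μ,
        0 < (μ[fun ω' => Real.exp (l * (Z (n + 1) ω' - μZ (n + 1) ω'))|ℱ n]) ω :=
      condexp_pos_ae (ℱ.le n) (hYint (n + 1)) (fun ω => Real.exp_pos _)
    filter_upwards [hpos] with ω h
    rw [hψ]
    simp only [Nat.add_sub_cancel]
    exact Real.exp_log h
  -- decomposition of M (n+1)
  have hMsucc : ∀ (n : ℕ) (ω : Ω), M (n + 1) ω
      = Real.exp (l * (Z (n + 1) ω - μZ (n + 1) ω))
        * (M n ω * Real.exp (-ψ (n + 1) l ω)) := by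
    intro n ω
    rw [hMdef]
    dsimp only
    rw [Finset.sum_Icc_succ_top (Nat.succ_le_succ (Nat.zero_le n)), Real.exp_add, hξdef]
    dsimp only
    rw [sub_eq_add_neg (l * (Z (n + 1) ω - μZ (n + 1) ω)), Real.exp_add]
    ring
  have hgmeas : ∀ n : ℕ, StronglyMeasurable[ℱ n]
      (fun ω => M n ω * Real.exp (-ψ (n + 1) l ω)) := by
    intro n
    refine Measurable.stronglyMeasurable ?_
    refine (hMadp n).measurable.mul (Real.measurable_exp.comp ?_)
    have hψm : Measurable[ℱ n] (ψ (n + 1) l) := by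
      have := hψmeas (n + 1)
      simpa using this
    exact hψm.neg
  -- integrability of M n by induction
  have hMint : ∀ n, Integrable (M n) μ := by
    intro n
    induction n with
    | zero => rw [hM0]; exact integrable_const _
    | succ n ih =>
      have hbound : ∀ᵐ ω ∂μ, (M n ω * Real.exp (-ψ (n + 1) l ω))
          * (μ[fun ω' => Real.exp (l * (Z (n + 1) ω' - μZ (n + 1) ω'))|ℱ n]) ω ≤ M n ω := by
        filter_upwards [hψeq n] with ω h
        rw [← h, mul_assoc, ← Real.exp_add]
        simp
      have hkey := key_tower (ℱ.le n) (hYint (n + 1)) (fun ω => (Real.exp_pos _).le)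
        (hgmeas n) (fun ω => mul_nonneg (hMpos n ω).le (Real.exp_pos _).le)
        ih hbound le_rfl
      exact hkey.1.congr (Filter.Eventually.of_forall fun ω => (hMsucc n ω).symm)
  -- supermartingale property
  have hstep : ∀ n, μ[M (n + 1)|ℱ n] ≤ᵐ[μ] M n := by
    intro n
    have hprod : Integrable ((fun ω => M n ω * Real.exp (-ψ (n + 1) l ω))
        * fun ω => Real.exp (l * (Z (n + 1) ω - μZ (n + 1) ω))) μ := by
      refine (hMint (n + 1)).congr (Filter.Eventually.of_forall fun ω => ?_)
      simp only [Pi.mul_apply]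
      rw [hMsucc n ω]; ring
    have hpull := condExp_mul_of_stronglyMeasurable_left (μ := μ) (hgmeas n) hprod (hYint (n + 1))
    have hMeq : M (n + 1) = (fun ω => M n ω * Real.exp (-ψ (n + 1) l ω))
        * fun ω => Real.exp (l * (Z (n + 1) ω - μZ (n + 1) ω)) := by
      funext ω
      rw [hMsucc n ω]
      simp [mul_comm]
    rw [hMeq]
    filter_upwards [hpull, hψeq n] with ω h1 h2
    rw [h1]
    simp only [Pi.mul_apply]
    rw [← h2, mul_assoc, ← Real.exp_add]
    simp
  have hMsuper : Supermartingale M ℱ μ := supermartingale_nat hMadp hMint hstep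
  -- integral of M 0 is 1
  have hM0int : ∫ ω, M 0 ω ∂μ = 1 := by
    rw [hM0]
    simp
  -- the bad sets
  set ε : NNReal := (Real.exp x).toNNReal with hεdef
  have hεcoe : (ε : ℝ) = Real.exp x := Real.coe_toNNReal _ (Real.exp_pos x).le
  set A : ℕ → Set Ω := fun N =>
    {ω | (ε : ℝ) ≤ (Finset.range (N + 1)).sup' Finset.nonempty_range_add_one fun k => M k ω}
    with hAdef
  have hAbound : ∀ N, μ (A N) ≤ ENNReal.ofReal (Real.exp (-x)) := by
    intro N
    have h := supermartingale_maximal hMsuper (fun i ω => (hMpos i ω).le) (ε := ε) N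
    rw [hM0int] at h
    have hmul : (ε : ℝ≥0∞) * μ (A N) ≤ 1 := by
      rw [← ENNReal.ofReal_one]
      exact h
    have hprod : ENNReal.ofReal (Real.exp (-x)) * (ε : ℝ≥0∞) = 1 := by
      have hεo : ((ε : ℝ≥0∞)) = ENNReal.ofReal (Real.exp x) := by rw [hεdef]; rfl
      rw [hεo, ← ENNReal.ofReal_mul (Real.exp_pos (-x)).le, ← Real.exp_add]
      simp
    calc μ (A N) = (ENNReal.ofReal (Real.exp (-x)) * (ε : ℝ≥0∞)) * μ (A N) := by
          rw [hprod, one_mul]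
      _ = ENNReal.ofReal (Real.exp (-x)) * ((ε : ℝ≥0∞) * μ (A N)) := by rw [mul_assoc]
      _ ≤ ENNReal.ofReal (Real.exp (-x)) * 1 := by
          exact mul_le_mul_right hmul _
      _ = ENNReal.ofReal (Real.exp (-x)) := mul_one _
  -- the good event
  set G : Set Ω := {ω | ∀ n : ℕ,
      ∑ i ∈ Finset.Icc 1 n, l * Z i ω ≤
        x + ∑ i ∈ Finset.Icc 1 n, (l * μZ i ω + ψ i l ω)} with hGdef
  have hGmeas : MeasurableSet G := by
    rw [hGdef]
    rw [Set.setOf_forall]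
    refine MeasurableSet.iInter fun n => ?_
    refine measurableSet_le ?_ ?_
    · refine Finset.measurable_sum _ fun i hi => ?_
      rw [Finset.mem_Icc] at hi
      exact (measurable_const.mul ((hZmeas i hi.1).mono (ℱ.le i) le_rfl))
    · refine Measurable.add measurable_const ?_
      refine Finset.measurable_sum _ fun i hi => ?_
      refine Measurable.add ?_ ?_
      · exact measurable_const.mul ((hμZm i).measurable.mono (ℱ.le _) le_rfl)
      · exact (hψmeas i).mono (ℱ.le _) le_rfl
  have hcompl : Gᶜ ⊆ ⋃ N, A N := by
    intro ω hω
    rw [hGdef] at hω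
    simp only [Set.mem_compl_iff, Set.mem_setOf_eq, not_forall, not_le] at hω
    obtain ⟨n, hn⟩ := hω
    refine Set.mem_iUnion.mpr ⟨n, ?_⟩
    rw [hAdef]
    simp only [Set.mem_setOf_eq]
    refine le_trans ?_ (Finset.le_sup' (fun k => M k ω)
      (Finset.self_mem_range_succ n))
    rw [hεcoe, hMdef]
    show Real.exp x ≤ Real.exp (∑ i ∈ Finset.Icc 1 n, ξ i ω)
    refine (Real.exp_le_exp.mpr ?_)
    have hsum : ∑ i ∈ Finset.Icc 1 n, ξ i ω
        = ∑ i ∈ Finset.Icc 1 n, l * Z i ω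
          - ∑ i ∈ Finset.Icc 1 n, (l * μZ i ω + ψ i l ω) := by
      rw [← Finset.sum_sub_distrib]
      refine Finset.sum_congr rfl fun i _ => ?_
      rw [hξdef]
      ring
    rw [hsum]
    linarith
  have hGc : μ Gᶜ ≤ ENNReal.ofReal (Real.exp (-x)) := by
    refine le_trans (measure_mono hcompl) ?_
    have hmono : Monotone A := by
      intro i j hij ω hω
      rw [hAdef] at hω ⊢
      simp only [Set.mem_setOf_eq] at hω ⊢
      refine le_trans hω ?_
      refine Finset.sup'_le _ _ fun k hk => ?_
      exact Finset.le_sup' (fun k => M k ω) (Finset.mem_range.mpr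
        (lt_of_lt_of_le (Finset.mem_range.mp hk) (Nat.succ_le_succ hij)))
    rw [hmono.directed_le.measure_iUnion]
    exact iSup_le hAbound
  have hfinal : μ Gᶜ = 1 - μ G := prob_compl_eq_one_sub hGmeas
  have h1 : (1 : ℝ≥0∞) - ENNReal.ofReal (Real.exp (-x)) ≤ μ G := by
    have := hGc
    rw [hfinal] at this
    exact tsub_le_iff_left.mpr (tsub_le_iff_right.mp this)
  calc ENNReal.ofReal (1 - Real.exp (-x))
      = 1 - ENNReal.ofReal (Real.exp (-x)) := by
        rw [ENNReal.ofReal_sub _ (Real.exp_pos (-x)).le, ENNReal.ofReal_one]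
    _ ≤ μ G := h1
end

section
/- For any δ > 0, α > 0 and any two vectors θ, θ^α ∈ [0,B]^d with ‖θ − θ^α‖₂ ≤ α, with probability at least 1 − δ it holds simultaneously for all t ∈ ℕ that | (1/2)‖θ* − θ^α‖²_{2,Ẽ_t} − (1/2)‖θ* − θ‖²_{2,Ẽ_t} + L_{2,t}(θ) − L_{2,t}(θ^α) | ≤ α t d ( 8B + √(8η² log(4dt²/δ)) ). -/
open MeasureTheory Finset

/-- Cumulative squared prediction error `L_{2,t}(θ) = Σ_{τ=1}^{t−1} Σ_{i∈A_τ} (θ_i − R_{τ,i})²`. -/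
noncomputable def predError {Ω : Type*} {d : ℕ} (A : ℕ → Ω → Finset (Fin d))
    (R : ℕ → Fin d → Ω → ℝ) (t : ℕ) (θ : Fin d → ℝ) (ω : Ω) : ℝ :=
  ∑ τ ∈ Finset.Ico 1 t, ∑ i ∈ A τ ω, (θ i - R τ i ω) ^ 2

/-- `n_{t,i} = #{τ < t : i ∈ A_τ}`, the number of pulls of arm `i` before round `t`. -/
def nPulls {Ω : Type*} {d : ℕ} (A : ℕ → Ω → Finset (Fin d)) (t : ℕ) (i : Fin d) (ω : Ω) : ℕ :=
  ((Finset.Ico 1 t).filter fun τ => i ∈ A τ ω).card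

/-- Squared empirical 2-norm `‖Δ‖²_{2,Ẽ_t} = Σ_{i=1}^d n_{t,i} Δ_i²`. -/
noncomputable def empNormSq {Ω : Type*} {d : ℕ} (A : ℕ → Ω → Finset (Fin d)) (t : ℕ)
    (Δ : Fin d → ℝ) (ω : Ω) : ℝ :=
  ∑ i : Fin d, (nPulls A t i ω : ℝ) * Δ i ^ 2

/-- A sub-Gaussian tail bound obtained from a conditional mgf bound via the Chernoff method. -/
lemma tail_bound {Ω : Type*} {m0 : MeasurableSpace Ω} {μ : Measure Ω}
    [IsProbabilityMeasure μ] {m : MeasurableSpace Ω} (hm : m ≤ m0)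
    (η : ℝ) (hη : 0 < η) (X : Ω → ℝ)
    (hint : ∀ l : ℝ, Integrable (fun ω => Real.exp (l * X ω)) μ)
    (hsubG : ∀ l : ℝ, ∀ᵐ ω ∂μ,
      (μ[fun ω' => Real.exp (l * X ω') | m]) ω ≤ Real.exp (l ^ 2 * η ^ 2 / 2))
    (x : ℝ) (hx : 0 ≤ x) :
    μ {ω | x < |X ω|} ≤ ENNReal.ofReal (2 * Real.exp (-(x ^ 2) / (2 * η ^ 2))) := by
  have hmgf : ∀ l : ℝ, ProbabilityTheory.mgf X μ l ≤ Real.exp (l ^ 2 * η ^ 2 / 2) := by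
    intro l
    have h1 : ∫ ω, (μ[fun ω' => Real.exp (l * X ω') | m]) ω ∂μ
        = ∫ ω, Real.exp (l * X ω) ∂μ := integral_condExp hm
    have h2 : ∫ ω, (μ[fun ω' => Real.exp (l * X ω') | m]) ω ∂μ
        ≤ ∫ _ω, Real.exp (l ^ 2 * η ^ 2 / 2) ∂μ :=
      integral_mono_ae integrable_condExp (integrable_const _) (hsubG l)
    have h3 : ∫ _ω, Real.exp (l ^ 2 * η ^ 2 / 2) ∂μ = Real.exp (l ^ 2 * η ^ 2 / 2) := by
      simp
    rw [ProbabilityTheory.mgf, ← h1]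
    rw [h3] at h2
    exact h2
  set l : ℝ := x / η ^ 2 with hl
  have hl0 : 0 ≤ l := div_nonneg hx (by positivity)
  have hexp : Real.exp (-l * x) * Real.exp (l ^ 2 * η ^ 2 / 2)
      = Real.exp (-(x ^ 2) / (2 * η ^ 2)) := by
    rw [← Real.exp_add]
    have hη' : η ≠ 0 := ne_of_gt hη
    congr 1
    have h1 : η ^ 2 * η⁻¹ ^ 2 = 1 := by field_simp
    have h2 : η ^ 4 * η⁻¹ ^ 4 = 1 := by field_simp
    field_simp
    linear_combination (-2 * x ^ 2) * h1 + (x ^ 2) * h2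
  have hup : (μ {ω | x ≤ X ω}).toReal ≤ Real.exp (-(x ^ 2) / (2 * η ^ 2)) := by
    calc (μ {ω | x ≤ X ω}).toReal ≤ Real.exp (-l * x) * ProbabilityTheory.mgf X μ l :=
          ProbabilityTheory.measure_ge_le_exp_mul_mgf x hl0 (hint l)
      _ ≤ Real.exp (-l * x) * Real.exp (l ^ 2 * η ^ 2 / 2) :=
          mul_le_mul_of_nonneg_left (hmgf l) (Real.exp_pos _).le
      _ = _ := hexp
  have hdown : (μ {ω | x ≤ -X ω}).toReal ≤ Real.exp (-(x ^ 2) / (2 * η ^ 2)) := by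
    have hint' : Integrable (fun ω => Real.exp (l * (-X ω))) μ := by
      simpa [neg_mul, mul_neg] using hint (-l)
    have hmgf' : ProbabilityTheory.mgf (fun ω => -X ω) μ l ≤ Real.exp (l ^ 2 * η ^ 2 / 2) := by
      have : ProbabilityTheory.mgf (fun ω => -X ω) μ l = ProbabilityTheory.mgf X μ (-l) := by
        simp [ProbabilityTheory.mgf, neg_mul, mul_neg]
      rw [this]
      simpa using hmgf (-l)
    calc (μ {ω | x ≤ -X ω}).toReal
        ≤ Real.exp (-l * x) * ProbabilityTheory.mgf (fun ω => -X ω) μ l :=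
          ProbabilityTheory.measure_ge_le_exp_mul_mgf x hl0 hint'
      _ ≤ Real.exp (-l * x) * Real.exp (l ^ 2 * η ^ 2 / 2) :=
          mul_le_mul_of_nonneg_left hmgf' (Real.exp_pos _).le
      _ = _ := hexp
  have hsub : {ω | x < |X ω|} ⊆ {ω | x ≤ X ω} ∪ {ω | x ≤ -X ω} := by
    intro ω hω
    rcases abs_cases (X ω) with ⟨h, _⟩ | ⟨h, _⟩
    · left; simp only [Set.mem_setOf_eq] at *; linarith
    · right; simp only [Set.mem_setOf_eq] at *; linarith
  calc μ {ω | x < |X ω|} ≤ μ ({ω | x ≤ X ω} ∪ {ω | x ≤ -X ω}) := measure_mono hsub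
    _ ≤ μ {ω | x ≤ X ω} + μ {ω | x ≤ -X ω} := measure_union_le _ _
    _ ≤ ENNReal.ofReal (Real.exp (-(x ^ 2) / (2 * η ^ 2)))
        + ENNReal.ofReal (Real.exp (-(x ^ 2) / (2 * η ^ 2))) := by
        gcongr
        · exact (ENNReal.le_ofReal_iff_toReal_le (measure_ne_top _ _) (Real.exp_pos _).le).2 hup
        · exact (ENNReal.le_ofReal_iff_toReal_le (measure_ne_top _ _) (Real.exp_pos _).le).2 hdown
    _ = ENNReal.ofReal (2 * Real.exp (-(x ^ 2) / (2 * η ^ 2))) := by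
        rw [← ENNReal.ofReal_add (Real.exp_pos _).le (Real.exp_pos _).le]; ring_nf

/-- Exchanging the order of summation in the empirical norm. -/
lemma empNormSq_swap {Ω : Type*} {d : ℕ} (A : ℕ → Ω → Finset (Fin d)) (t : ℕ)
    (Δ : Fin d → ℝ) (ω : Ω) :
    empNormSq A t Δ ω = ∑ τ ∈ Finset.Ico 1 t, ∑ i ∈ A τ ω, Δ i ^ 2 := by
  unfold empNormSq nPulls
  calc ∑ i : Fin d, ((((Finset.Ico 1 t).filter fun τ => i ∈ A τ ω).card : ℕ) : ℝ) * Δ i ^ 2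
      = ∑ i : Fin d, ∑ τ ∈ Finset.Ico 1 t, if i ∈ A τ ω then Δ i ^ 2 else 0 := by
        refine Finset.sum_congr rfl fun i _ => ?_
        rw [← Finset.sum_filter, Finset.sum_const, nsmul_eq_mul]
    _ = ∑ τ ∈ Finset.Ico 1 t, ∑ i : Fin d, if i ∈ A τ ω then Δ i ^ 2 else 0 :=
        Finset.sum_comm
    _ = ∑ τ ∈ Finset.Ico 1 t, ∑ i ∈ A τ ω, Δ i ^ 2 := by
        refine Finset.sum_congr rfl fun τ _ => ?_
        rw [Finset.sum_ite_mem, Finset.univ_inter]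

/-- The sum `∑_{s≥0} 1/(s+1)²` is at most 2. -/
lemma basel_le_two : HasSum (fun s : ℕ => (1 : ℝ) / ((s : ℝ) + 1) ^ 2) (Real.pi ^ 2 / 6)
    ∧ Real.pi ^ 2 / 6 ≤ 2 := by
  constructor
  · have h := hasSum_zeta_two
    rw [← hasSum_nat_add_iff' 1] at h
    simpa using h
  · nlinarith [Real.pi_lt_d2, Real.pi_pos]

/-- Lemma 4 of the paper (discretization error): for any `δ, α > 0` and any
`θ, θ^α ∈ [0,B]^d` with `‖θ − θ^α‖₂ ≤ α`, with probability at least `1 − δ`,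
simultaneously for all rounds `t`,
`|½‖θ* − θ^α‖²_{2,Ẽ_t} − ½‖θ* − θ‖²_{2,Ẽ_t} + L_{2,t}(θ) − L_{2,t}(θ^α)|
  ≤ α t d (8B + √(8η² log(4dt²/δ)))`. -/
theorem discretization_error_bound
    {Ω : Type*} {m0 : MeasurableSpace Ω} {μ : Measure Ω} [IsProbabilityMeasure μ]
    (d : ℕ) (B η : ℝ) (hB : 0 < B) (hη : 0 < η)
    (θstar : Fin d → ℝ) (hθstar : ∀ i, θstar i ∈ Set.Icc (0 : ℝ) B)
    (ℱ : Filtration ℕ m0)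
    (A : ℕ → Ω → Finset (Fin d))
    (hA : ∀ t, 1 ≤ t → ∀ i, MeasurableSet[ℱ (t - 1)] {ω | i ∈ A t ω})
    (R : ℕ → Fin d → Ω → ℝ)
    (hR : ∀ t, 1 ≤ t → ∀ i, Measurable[ℱ t] (R t i))
    (hint : ∀ (l : ℝ) t, 1 ≤ t → ∀ i,
      Integrable (fun ω => Real.exp (l * (R t i ω - θstar i))) μ)
    -- the noise `ε_{t,i} = R_{t,i} − θ*_i` is conditionally `η`-sub-Gaussian
    (hsubG : ∀ (l : ℝ) t, 1 ≤ t → ∀ i,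
      ∀ᵐ ω ∂μ, (μ[fun ω' => Real.exp (l * (R t i ω' - θstar i)) | ℱ (t - 1)]) ω ≤
        Real.exp (l ^ 2 * η ^ 2 / 2))
    (δ α : ℝ) (hδ : 0 < δ) (hα : 0 < α)
    (θ θα : Fin d → ℝ)
    (hθ : ∀ i, θ i ∈ Set.Icc (0 : ℝ) B) (hθα : ∀ i, θα i ∈ Set.Icc (0 : ℝ) B)
    (hclose : Real.sqrt (∑ i, (θ i - θα i) ^ 2) ≤ α) :
    ENNReal.ofReal (1 - δ) ≤
      μ {ω | ∀ t : ℕ, 1 ≤ t →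
        |(1 / 2) * empNormSq A t (θstar - θα) ω - (1 / 2) * empNormSq A t (θstar - θ) ω
            + predError A R t θ ω - predError A R t θα ω| ≤
          α * t * d * (8 * B + Real.sqrt (8 * η ^ 2 * Real.log (4 * d * t ^ 2 / δ)))} := by
  classical
  -- trivial case δ ≥ 1
  rcases le_or_gt 1 δ with hδ1 | hδ1
  · have h0 : ENNReal.ofReal (1 - δ) = 0 := by
      rw [ENNReal.ofReal_eq_zero]; linarith
    rw [h0]; exact zero_le
  -- trivial case d = 0
  rcases Nat.eq_zero_or_pos d with hd | hd
  · subst hd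
    have hset : {ω : Ω | ∀ t : ℕ, 1 ≤ t →
        |(1 / 2) * empNormSq A t (θstar - θα) ω - (1 / 2) * empNormSq A t (θstar - θ) ω
            + predError A R t θ ω - predError A R t θα ω| ≤
          α * t * 0 * (8 * B + Real.sqrt (8 * η ^ 2 * Real.log (4 * 0 * t ^ 2 / δ)))}
        = Set.univ := by
      ext ω
      simp only [Set.mem_setOf_eq, Set.mem_univ, iff_true]
      intro t _
      have hA0 : ∀ τ, A τ ω = ∅ := fun τ => Finset.eq_empty_of_isEmpty _
      simp [empNormSq, predError, hA0]
    simp only [Nat.cast_zero] at hset ⊢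
    rw [hset, measure_univ]
    exact ENNReal.ofReal_le_one.2 (by linarith)
  have hd1 : (1 : ℝ) ≤ (d : ℝ) := by exact_mod_cast hd
  -- notation
  set x : ℕ → ℝ := fun τ => Real.sqrt (2 * η ^ 2 * Real.log (4 * d * τ ^ 2 / δ)) with hxdef
  have hargpos : ∀ τ : ℕ, 1 ≤ τ → (1 : ℝ) ≤ 4 * d * (τ : ℝ) ^ 2 / δ := by
    intro τ hτ
    have hτ1 : (1 : ℝ) ≤ (τ : ℝ) := by exact_mod_cast hτ
    rw [le_div_iff₀ hδ]
    nlinarith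
  have hlog0 : ∀ τ : ℕ, 1 ≤ τ → 0 ≤ Real.log (4 * d * (τ : ℝ) ^ 2 / δ) :=
    fun τ hτ => Real.log_nonneg (hargpos τ hτ)
  have hxmono : ∀ τ t : ℕ, 1 ≤ τ → τ ≤ t → x τ ≤ x t := by
    intro τ t hτ hτt
    apply Real.sqrt_le_sqrt
    apply mul_le_mul_of_nonneg_left _ (by positivity)
    apply Real.log_le_log (by positivity)
    have : (τ : ℝ) ≤ (t : ℝ) := by exact_mod_cast hτt
    gcongr
  -- the good event
  set E : Set Ω :=
    ⋂ (s : ℕ), ⋂ (i : Fin d), {ω | |R (s + 1) i ω - θstar i| ≤ x (s + 1)} with hEdef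
  -- E is contained in the target event
  have hES : E ⊆ {ω | ∀ t : ℕ, 1 ≤ t →
      |(1 / 2) * empNormSq A t (θstar - θα) ω - (1 / 2) * empNormSq A t (θstar - θ) ω
          + predError A R t θ ω - predError A R t θα ω| ≤
        α * t * d * (8 * B + Real.sqrt (8 * η ^ 2 * Real.log (4 * d * t ^ 2 / δ)))} := by
    intro ω hω
    simp only [hEdef, Set.mem_iInter, Set.mem_setOf_eq] at hω
    intro t ht
    set C : ℝ := 8 * B + Real.sqrt (8 * η ^ 2 * Real.log (4 * d * (t : ℝ) ^ 2 / δ)) with hCdef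
    have h2x : Real.sqrt (8 * η ^ 2 * Real.log (4 * d * (t : ℝ) ^ 2 / δ)) = 2 * x t := by
      rw [hxdef]
      rw [show (8 : ℝ) * η ^ 2 * Real.log (4 * d * (t : ℝ) ^ 2 / δ)
          = 4 * (2 * η ^ 2 * Real.log (4 * d * (t : ℝ) ^ 2 / δ)) by ring]
      rw [Real.sqrt_mul (by norm_num : (0:ℝ) ≤ 4)]
      congr 1
      rw [show (4 : ℝ) = 2 ^ 2 by norm_num, Real.sqrt_sq (by norm_num : (0:ℝ) ≤ 2)]
    have hxt0 : 0 ≤ x t := Real.sqrt_nonneg _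
    have hC0 : 0 ≤ C := by rw [hCdef]; positivity
    -- pointwise bound on individual terms
    set g : ℕ → Fin d → ℝ := fun τ i =>
      1 / 2 * (θstar i - θα i) ^ 2 - 1 / 2 * (θstar i - θ i) ^ 2
        + ((θ i - R τ i ω) ^ 2 - (θα i - R τ i ω) ^ 2) with hgdef
    have hrw : (1 / 2) * empNormSq A t (θstar - θα) ω - (1 / 2) * empNormSq A t (θstar - θ) ω
        + predError A R t θ ω - predError A R t θα ω
        = ∑ τ ∈ Finset.Ico 1 t, ∑ i ∈ A τ ω, g τ i := by
      rw [empNormSq_swap, empNormSq_swap]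
      unfold predError
      rw [Finset.mul_sum, Finset.mul_sum, ← Finset.sum_sub_distrib, ← Finset.sum_add_distrib,
        ← Finset.sum_sub_distrib]
      refine Finset.sum_congr rfl fun τ _ => ?_
      rw [Finset.mul_sum, Finset.mul_sum, ← Finset.sum_sub_distrib, ← Finset.sum_add_distrib,
        ← Finset.sum_sub_distrib]
      refine Finset.sum_congr rfl fun i _ => ?_
      simp only [hgdef, Pi.sub_apply]
      ring
    have hg : ∀ τ ∈ Finset.Ico 1 t, ∀ i : Fin d, |g τ i| ≤ α * C := by
      intro τ hτ i
      obtain ⟨hτ1, hτt⟩ := Finset.mem_Ico.1 hτ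
      have hε : |R τ i ω - θstar i| ≤ x τ := by
        have h := hω (τ - 1) i
        have he : τ - 1 + 1 = τ := by omega
        rwa [he] at h
      have hxτ : x τ ≤ x t := hxmono τ t hτ1 (le_of_lt hτt)
      have habs : |θ i - θα i| ≤ α := by
        have h1 : (θ i - θα i) ^ 2 ≤ ∑ j, (θ j - θα j) ^ 2 :=
          Finset.single_le_sum (f := fun j => (θ j - θα j) ^ 2)
            (fun j _ => sq_nonneg _) (Finset.mem_univ i)
        calc |θ i - θα i| = Real.sqrt ((θ i - θα i) ^ 2) := (Real.sqrt_sq_eq_abs _).symm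
          _ ≤ Real.sqrt (∑ j, (θ j - θα j) ^ 2) := Real.sqrt_le_sqrt h1
          _ ≤ α := hclose
      have hmid : |θ i + θα i - 2 * θstar i| ≤ 2 * B := by
        have h1 := hθ i; have h2 := hθα i; have h3 := hθstar i
        rw [Set.mem_Icc] at h1 h2 h3
        rw [abs_le]; constructor <;> linarith [h1.1, h1.2, h2.1, h2.2, h3.1, h3.2]
      have hid : g τ i = (θ i - θα i)
          * ((θ i + θα i - 2 * θstar i) / 2 - 2 * (R τ i ω - θstar i)) := by
        simp only [hgdef]; ring
      rw [hid, abs_mul]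
      have h2 : |(θ i + θα i - 2 * θstar i) / 2 - 2 * (R τ i ω - θstar i)| ≤ B + 2 * x t := by
        have ht1 : |(θ i + θα i - 2 * θstar i) / 2| ≤ B := by
          rw [abs_div, abs_of_nonneg (by norm_num : (0:ℝ) ≤ 2)]; linarith
        have ht2 : |2 * (R τ i ω - θstar i)| ≤ 2 * x t := by
          rw [abs_mul, abs_of_nonneg (by norm_num : (0:ℝ) ≤ 2)]
          have : |R τ i ω - θstar i| ≤ x t := hε.trans hxτ
          linarith
        calc |(θ i + θα i - 2 * θstar i) / 2 - 2 * (R τ i ω - θstar i)|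
            ≤ |(θ i + θα i - 2 * θstar i) / 2| + |2 * (R τ i ω - θstar i)| := abs_sub _ _
          _ ≤ B + 2 * x t := add_le_add ht1 ht2
      calc |θ i - θα i| * |(θ i + θα i - 2 * θstar i) / 2 - 2 * (R τ i ω - θstar i)|
          ≤ α * (B + 2 * x t) :=
            mul_le_mul habs h2 (abs_nonneg _) hα.le
        _ ≤ α * C := by
            apply mul_le_mul_of_nonneg_left _ hα.le
            rw [hCdef, h2x]; linarith
    -- assemble
    have hcard : ∀ τ : ℕ, ((A τ ω).card : ℝ) ≤ (d : ℝ) := by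
      intro τ
      have hn : (A τ ω).card ≤ d := (Finset.card_le_univ _).trans_eq (by simp)
      exact_mod_cast hn
    calc |(1 / 2) * empNormSq A t (θstar - θα) ω - (1 / 2) * empNormSq A t (θstar - θ) ω
        + predError A R t θ ω - predError A R t θα ω|
        = |∑ τ ∈ Finset.Ico 1 t, ∑ i ∈ A τ ω, g τ i| := by rw [hrw]
      _ ≤ ∑ τ ∈ Finset.Ico 1 t, |∑ i ∈ A τ ω, g τ i| := Finset.abs_sum_le_sum_abs _ _
      _ ≤ ∑ τ ∈ Finset.Ico 1 t, ∑ i ∈ A τ ω, |g τ i| :=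
          Finset.sum_le_sum fun τ _ => Finset.abs_sum_le_sum_abs _ _
      _ ≤ ∑ τ ∈ Finset.Ico 1 t, ∑ i ∈ A τ ω, (α * C) :=
          Finset.sum_le_sum fun τ hτ => Finset.sum_le_sum fun i _ => hg τ hτ i
      _ ≤ ∑ τ ∈ Finset.Ico 1 t, (d : ℝ) * (α * C) := by
          refine Finset.sum_le_sum fun τ _ => ?_
          rw [Finset.sum_const, nsmul_eq_mul]
          exact mul_le_mul_of_nonneg_right (hcard τ) (by positivity)
      _ = ((t - 1 : ℕ) : ℝ) * ((d : ℝ) * (α * C)) := by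
          rw [Finset.sum_const, nsmul_eq_mul, Nat.card_Ico]
      _ ≤ α * t * d * C := by
          have h1 : ((t - 1 : ℕ) : ℝ) ≤ (t : ℝ) := by exact_mod_cast Nat.sub_le t 1
          have h2 : ((t - 1 : ℕ) : ℝ) * ((d : ℝ) * (α * C)) ≤ (t : ℝ) * ((d : ℝ) * (α * C)) :=
            mul_le_mul_of_nonneg_right h1 (by positivity)
          nlinarith [h2]
  -- measurability of the bad events
  have hXmeas : ∀ s : ℕ, ∀ i : Fin d, Measurable fun ω => R (s + 1) i ω - θstar i := by
    intro s i
    exact ((hR (s + 1) (by omega) i).mono (ℱ.le _) le_rfl).sub measurable_const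
  have hEmeas : MeasurableSet E := by
    refine MeasurableSet.iInter fun s => MeasurableSet.iInter fun i => ?_
    exact measurableSet_le (hXmeas s i).abs measurable_const
  -- probability of each bad event
  have hμbad : ∀ (s : ℕ) (i : Fin d),
      μ {ω | x (s + 1) < |R (s + 1) i ω - θstar i|}
        ≤ ENNReal.ofReal (δ / 2 * (1 / ((s : ℝ) + 1) ^ 2) / d) := by
    intro s i
    have hb := tail_bound (μ := μ) (ℱ.le ((s + 1) - 1)) η hη
      (fun ω => R (s + 1) i ω - θstar i)
      (fun l => hint l (s + 1) (by omega) i)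
      (fun l => hsubG l (s + 1) (by omega) i)
      (x (s + 1)) (Real.sqrt_nonneg _)
    refine hb.trans (le_of_eq ?_)
    congr 1
    have hcast : ((s + 1 : ℕ) : ℝ) = (s : ℝ) + 1 := by push_cast; ring
    have hpos : (0 : ℝ) < 4 * d * ((s + 1 : ℕ) : ℝ) ^ 2 / δ := by
      rw [hcast]; positivity
    have hL0 : 0 ≤ Real.log (4 * d * ((s + 1 : ℕ) : ℝ) ^ 2 / δ) := hlog0 (s + 1) (by omega)
    have hx2 : (x (s + 1)) ^ 2 = 2 * η ^ 2 * Real.log (4 * d * ((s + 1 : ℕ) : ℝ) ^ 2 / δ) := by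
      rw [hxdef]
      exact Real.sq_sqrt (by positivity)
    rw [hx2]
    have hη' : η ≠ 0 := ne_of_gt hη
    have hdiv : -(2 * η ^ 2 * Real.log (4 * d * ((s + 1 : ℕ) : ℝ) ^ 2 / δ)) / (2 * η ^ 2)
        = -Real.log (4 * d * ((s + 1 : ℕ) : ℝ) ^ 2 / δ) := by
      field_simp
    rw [hdiv, Real.exp_neg, Real.exp_log hpos]
    rw [hcast]
    have hd0 : (d : ℝ) ≠ 0 := by positivity
    have hs0 : ((s : ℝ) + 1) ≠ 0 := by positivity
    field_simp
    ring
  -- total bad probability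
  have hbadtotal : μ Eᶜ ≤ ENNReal.ofReal δ := by
    have hcomp : Eᶜ ⊆ ⋃ (p : ℕ × Fin d),
        {ω | x (p.1 + 1) < |R (p.1 + 1) p.2 ω - θstar p.2|} := by
      intro ω hω
      simp only [hEdef, Set.mem_compl_iff, Set.mem_iInter, Set.mem_setOf_eq, not_forall,
        not_le] at hω
      obtain ⟨s, i, h⟩ := hω
      exact Set.mem_iUnion.2 ⟨(s, i), h⟩
    obtain ⟨hbasel, hbasel2⟩ := basel_le_two
    have hsummable : Summable (fun s : ℕ => δ / 2 * (1 / ((s : ℝ) + 1) ^ 2)) :=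
      (hbasel.mul_left (δ / 2)).summable
    have htsum : (∑' s : ℕ, δ / 2 * (1 / ((s : ℝ) + 1) ^ 2)) ≤ δ := by
      rw [(hbasel.mul_left (δ / 2)).tsum_eq]
      nlinarith
    calc μ Eᶜ ≤ μ (⋃ (p : ℕ × Fin d),
          {ω | x (p.1 + 1) < |R (p.1 + 1) p.2 ω - θstar p.2|}) := measure_mono hcomp
      _ ≤ ∑' (p : ℕ × Fin d), μ {ω | x (p.1 + 1) < |R (p.1 + 1) p.2 ω - θstar p.2|} :=
          measure_iUnion_le _
      _ ≤ ∑' (p : ℕ × Fin d), ENNReal.ofReal (δ / 2 * (1 / ((p.1 : ℝ) + 1) ^ 2) / d) :=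
          ENNReal.tsum_le_tsum fun p => hμbad p.1 p.2
      _ = ∑' (s : ℕ), ∑' (i : Fin d), ENNReal.ofReal (δ / 2 * (1 / ((s : ℝ) + 1) ^ 2) / d) :=
          ENNReal.tsum_prod' (f := fun (p : ℕ × Fin d) =>
            ENNReal.ofReal (δ / 2 * (1 / ((p.1 : ℝ) + 1) ^ 2) / d))
      _ = ∑' (s : ℕ), ENNReal.ofReal (δ / 2 * (1 / ((s : ℝ) + 1) ^ 2)) := by
          refine tsum_congr fun s => ?_
          rw [tsum_fintype, Finset.sum_const, nsmul_eq_mul]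
          have hcard : ((Finset.univ : Finset (Fin d)).card : ENNReal) = (d : ENNReal) := by
            simp
          rw [hcard, show ((d : ℕ) : ENNReal) = ENNReal.ofReal (d : ℝ) by
            simp [ENNReal.ofReal_natCast], ← ENNReal.ofReal_mul (by positivity)]
          congr 1
          have hd0 : (d : ℝ) ≠ 0 := by positivity
          field_simp
      _ ≤ ENNReal.ofReal δ := by
          rw [← ENNReal.ofReal_tsum_of_nonneg (fun s => by positivity) hsummable]
          exact ENNReal.ofReal_le_ofReal htsum
  -- conclude
  calc ENNReal.ofReal (1 - δ) = 1 - ENNReal.ofReal δ := by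
        rw [ENNReal.ofReal_sub _ hδ.le, ENNReal.ofReal_one]
    _ ≤ 1 - μ Eᶜ := tsub_le_tsub_left hbadtotal 1
    _ = μ E := by
        rw [prob_compl_eq_one_sub hEmeas]
        exact ENNReal.sub_sub_cancel ENNReal.one_ne_top prob_le_one
    _ ≤ _ := measure_mono hES
end

section
/- Let W ∈ ℝ^{d×d} be symmetric positive definite, β ≥ 0, θ̂ ∈ ℝ^d, and let C ⊆ { θ ∈ ℝ^d : (θ − θ̂)ᵀ W (θ − θ̂) ≤ β }. Let X ⊆ ℝ^d, θ* ∈ C, x* ∈ X, and suppose (x̃, θ̃) ∈ X × C satisfies ⟨x̃, θ̃⟩ ≥ ⟨x, θ⟩ for all (x, θ) ∈ X × C (i.e., it is an optimistic maximizer). Then the instantaneous regret satisfies ⟨x*, θ*⟩ − ⟨x̃, θ*⟩ ≤ 2 √(x̃ᵀ W⁻¹ x̃) · √β. -/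
open Matrix

open scoped MatrixOrder in
/-- Cauchy–Schwarz for a positive definite quadratic form:
`x ⬝ v ≤ √(xᵀ W⁻¹ x) √(vᵀ W v)`. -/
lemma cs_posdef {d : ℕ} (W : Matrix (Fin d) (Fin d) ℝ) (hW : W.PosDef)
    (x v : Fin d → ℝ) :
    x ⬝ᵥ v ≤ Real.sqrt (x ⬝ᵥ W⁻¹.mulVec x) * Real.sqrt (v ⬝ᵥ W.mulVec v) := by
  have hps := hW.posSemidef
  set S := CFC.sqrt W with hS
  have hSS : S * S = W := by have := CFC.sq_sqrt W (Matrix.nonneg_iff_posSemidef.2 hps); rwa [pow_two] at this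
  have hSsymm : Sᵀ = S := by
    have := (Matrix.nonneg_iff_posSemidef.1 (CFC.sqrt_nonneg W)).isHermitian
    simpa [Matrix.IsHermitian, Matrix.conjTranspose_eq_transpose_of_trivial] using this
  have hWsymm : Wᵀ = W := by
    have := hW.isHermitian
    simpa [Matrix.IsHermitian, Matrix.conjTranspose_eq_transpose_of_trivial] using this
  have key : ∀ u w : Fin d → ℝ, (S *ᵥ u) ⬝ᵥ (S *ᵥ w) = u ⬝ᵥ (W *ᵥ w) := by
    intro u w
    rw [Matrix.dotProduct_mulVec, ← Matrix.vecMul_transpose, Matrix.vecMul_vecMul,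
      hSsymm, hSS, ← Matrix.dotProduct_mulVec]
  set u := W⁻¹ *ᵥ x with hu
  have hWu : W *ᵥ u = x := by
    rw [hu, Matrix.mulVec_mulVec,
      Matrix.mul_nonsing_inv _ (isUnit_iff_ne_zero.2 hW.det_pos.ne'), Matrix.one_mulVec]
  have hwv : ∀ w : Fin d → ℝ, u ⬝ᵥ (W *ᵥ w) = x ⬝ᵥ w := by
    intro w
    rw [Matrix.dotProduct_mulVec, ← hWsymm, Matrix.vecMul_transpose, hWu]
  set a := S *ᵥ u
  set b := S *ᵥ v
  have h1 : x ⬝ᵥ v = a ⬝ᵥ b := by rw [key, hwv]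
  have h2 : a ⬝ᵥ a = x ⬝ᵥ W⁻¹ *ᵥ x := by
    rw [key, hwv, ← hu, dotProduct_comm]
  have h3 : b ⬝ᵥ b = v ⬝ᵥ W *ᵥ v := key v v
  have hcs := Real.sum_mul_le_sqrt_mul_sqrt Finset.univ a b
  rw [h1, ← h2, ← h3]
  simpa [dotProduct, sq] using hcs

/-- Lemma 8 of the paper (OFU regret decomposition): if the confidence set `C` is contained
in the ellipsoid `{θ : (θ − θ̂)ᵀ W (θ − θ̂) ≤ β}`, `θ* ∈ C`, `x* ∈ X`, and `(x̃, θ̃)` is an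
optimistic maximizer of `⟨x, θ⟩` over `X × C`, then the instantaneous regret satisfies
`⟨x*, θ*⟩ − ⟨x̃, θ*⟩ ≤ 2 √(x̃ᵀ W⁻¹ x̃) √β`. -/
theorem ofu_instantaneous_regret_bound
    {d : ℕ} (W : Matrix (Fin d) (Fin d) ℝ) (hW : W.PosDef)
    (β : ℝ) (hβ : 0 ≤ β) (θhat : Fin d → ℝ)
    (C : Set (Fin d → ℝ))
    (hC : C ⊆ {θ | (θ - θhat) ⬝ᵥ W.mulVec (θ - θhat) ≤ β})
    (X : Set (Fin d → ℝ))
    (θstar : Fin d → ℝ) (hθstar : θstar ∈ C)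
    (xstar : Fin d → ℝ) (hxstar : xstar ∈ X)
    (xt θt : Fin d → ℝ) (hxt : xt ∈ X) (hθt : θt ∈ C)
    (hopt : ∀ x ∈ X, ∀ θ ∈ C, x ⬝ᵥ θ ≤ xt ⬝ᵥ θt) :
    xstar ⬝ᵥ θstar - xt ⬝ᵥ θstar ≤ 2 * Real.sqrt (xt ⬝ᵥ W⁻¹.mulVec xt) * Real.sqrt β := by
  have hs : (0:ℝ) ≤ Real.sqrt (xt ⬝ᵥ W⁻¹.mulVec xt) := Real.sqrt_nonneg _
  have hA : xstar ⬝ᵥ θstar ≤ xt ⬝ᵥ θt := hopt _ hxstar _ hθstar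
  have hb1 : xt ⬝ᵥ (θt - θhat) ≤ Real.sqrt (xt ⬝ᵥ W⁻¹.mulVec xt) * Real.sqrt β := by
    refine (cs_posdef W hW xt (θt - θhat)).trans ?_
    exact mul_le_mul_of_nonneg_left (Real.sqrt_le_sqrt (hC hθt)) hs
  have hb2 : xt ⬝ᵥ (θhat - θstar) ≤ Real.sqrt (xt ⬝ᵥ W⁻¹.mulVec xt) * Real.sqrt β := by
    refine (cs_posdef W hW xt (θhat - θstar)).trans ?_
    refine mul_le_mul_of_nonneg_left (Real.sqrt_le_sqrt ?_) hs
    have : (θhat - θstar) ⬝ᵥ W.mulVec (θhat - θstar)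
        = (θstar - θhat) ⬝ᵥ W.mulVec (θstar - θhat) := by
      rw [show θhat - θstar = -(θstar - θhat) by ring, Matrix.mulVec_neg,
        dotProduct_neg, neg_dotProduct, neg_neg]
    rw [this]
    exact hC hθstar
  have hsum : xt ⬝ᵥ (θt - θhat) + xt ⬝ᵥ (θhat - θstar) = xt ⬝ᵥ θt - xt ⬝ᵥ θstar := by
    rw [dotProduct_sub, dotProduct_sub]; ring
  linarith
end

section
/- Under the deterministic OFU setup with horizon T, if θ* ∈ C_t for every t ≤ T, then Σ_{t=1}^T r_t² ≤ 8 β_T d log( 1 + T/γ ). -/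
open Matrix Finset

lemma aux_cs {ι : Type*} (s : Finset ι) (a u v : ι → ℝ) (ha : ∀ i ∈ s, 0 < a i) :
    ∑ i ∈ s, u i * v i ≤
      Real.sqrt (∑ i ∈ s, u i ^ 2 / a i) * Real.sqrt (∑ i ∈ s, a i * v i ^ 2) := by
  have h := Real.sum_mul_le_sqrt_mul_sqrt s (fun i => u i / Real.sqrt (a i))
    (fun i => Real.sqrt (a i) * v i)
  have h1 : ∀ i ∈ s, u i / Real.sqrt (a i) * (Real.sqrt (a i) * v i) = u i * v i := by
    intro i hi
    have hne : Real.sqrt (a i) ≠ 0 := Real.sqrt_ne_zero'.2 (ha i hi)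
    field_simp
  have h2 : ∀ i ∈ s, (u i / Real.sqrt (a i)) ^ 2 = u i ^ 2 / a i := by
    intro i hi
    rw [div_pow, Real.sq_sqrt (ha i hi).le]
  have h3 : ∀ i ∈ s, (Real.sqrt (a i) * v i) ^ 2 = a i * v i ^ 2 := by
    intro i hi
    rw [mul_pow, Real.sq_sqrt (ha i hi).le]
  rwa [Finset.sum_congr rfl h1, Finset.sum_congr rfl h2, Finset.sum_congr rfl h3] at h

lemma aux_log (u : ℝ) (hu : 1 ≤ u) : 1 / u ≤ 2 * (Real.log (u + 1) - Real.log u) := by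
  have hu0 : 0 < u := lt_of_lt_of_le one_pos hu
  have hu1 : 0 < u + 1 := by linarith
  have h := Real.log_le_sub_one_of_pos (show (0:ℝ) < u / (u+1) by positivity)
  rw [Real.log_div (ne_of_gt hu0) (ne_of_gt hu1)] at h
  have h2 : 1 - u / (u + 1) ≤ Real.log (u + 1) - Real.log u := by linarith
  have h3 : 1 - u / (u + 1) = 1 / (u + 1) := by field_simp; ring
  have h4 : 1 / u ≤ 2 * (1 / (u + 1)) := by
    rw [mul_one_div, div_le_div_iff₀ hu0 (by positivity)]
    linarith
  calc 1/u ≤ 2 * (1/(u+1)) := h4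
    _ ≤ 2 * (Real.log (u+1) - Real.log u) := by rw [← h3]; linarith

lemma aux_telescope (f : ℕ → ℝ) (T : ℕ) :
    ∑ t ∈ Finset.Icc 1 T, (f (t+1) - f t) = f (T+1) - f 1 := by
  induction T with
  | zero => simp
  | succ n ih => rw [Finset.sum_Icc_succ_top (by omega), ih]; ring


/-- The diagonal design matrix `A_t = γ I_d + Σ_{τ=1}^{t−1} diag(x_τ)`. -/
noncomputable def designMatrix {d : ℕ} (x : ℕ → Fin d → ℝ) (γ : ℝ) (t : ℕ) :
    Matrix (Fin d) (Fin d) ℝ :=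
  γ • (1 : Matrix (Fin d) (Fin d) ℝ) + ∑ τ ∈ Finset.Ico 1 t, Matrix.diagonal (x τ)

/-- Lemma 13 of the paper (sum of squared instantaneous regrets): in the deterministic OFU
setup with horizon `T`, if `θ* ∈ C_t` for every `t ≤ T`, then
`Σ_{t=1}^T r_t² ≤ 8 β_T d log(1 + T/γ)`. -/
theorem sum_squared_regret_le
    {d : ℕ} (hd : 1 ≤ d) (γ : ℝ) (hγ : 1 ≤ γ)
    (θstar : Fin d → ℝ) (T : ℕ)
    (β : ℕ → ℝ) (hβ0 : ∀ t, 0 ≤ β t) (hβT : ∀ t, t ≤ T → β t ≤ β T)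
    -- nonempty action sets of zero-one vectors and the chosen actions
    (Xset : ℕ → Set (Fin d → ℝ))
    (hX01 : ∀ t, Xset t ⊆ {v | ∀ i, v i = 0 ∨ v i = 1})
    (x : ℕ → Fin d → ℝ) (hx : ∀ t, 1 ≤ t → t ≤ T → x t ∈ Xset t)
    -- confidence sets contained in the `A_t`-ellipsoids of radius `√β_t` around `θ̂_t`
    (θhat : ℕ → Fin d → ℝ) (C : ℕ → Set (Fin d → ℝ))
    (hC : ∀ t, C t ⊆
      {θ | (θ - θhat t) ⬝ᵥ (designMatrix x γ t).mulVec (θ - θhat t) ≤ β t})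
    -- the actions are chosen optimistically
    (hopt : ∀ t, 1 ≤ t → t ≤ T →
      ∃ θt ∈ C t, ∀ x' ∈ Xset t, ∀ θ' ∈ C t, x' ⬝ᵥ θ' ≤ x t ⬝ᵥ θt)
    -- the true parameter lies in every confidence set
    (hθstar : ∀ t, 1 ≤ t → t ≤ T → θstar ∈ C t)
    -- `xstar t` attains `max_{x ∈ X_t} ⟨x, θ*⟩`
    (xstar : ℕ → Fin d → ℝ)
    (hxstar : ∀ t, 1 ≤ t → t ≤ T →
      xstar t ∈ Xset t ∧ ∀ x' ∈ Xset t, x' ⬝ᵥ θstar ≤ xstar t ⬝ᵥ θstar) :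
    ∑ t ∈ Finset.Icc 1 T, (xstar t ⬝ᵥ θstar - x t ⬝ᵥ θstar) ^ 2 ≤
      8 * β T * d * Real.log (1 + T / γ) := by
  classical
  have hγ0 : (0:ℝ) < γ := lt_of_lt_of_le one_pos hγ
  set s : ℕ → Fin d → ℝ := fun t i => ∑ τ ∈ Finset.Ico 1 t, x τ i with hs_def
  have hx01 : ∀ τ, 1 ≤ τ → τ ≤ T → ∀ i, x τ i = 0 ∨ x τ i = 1 :=
    fun τ h1 h2 i => hX01 τ (hx τ h1 h2) i
  have hs_nonneg : ∀ t, t ≤ T + 1 → ∀ i, 0 ≤ s t i := by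
    intro t ht i
    apply Finset.sum_nonneg
    intro τ hτ
    rw [Finset.mem_Ico] at hτ
    rcases hx01 τ hτ.1 (by omega) i with h | h <;> simp [h]
  have ha_pos : ∀ t, t ≤ T + 1 → ∀ i, 0 < γ + s t i := by
    intro t ht i
    have := hs_nonneg t ht i
    linarith
  -- quadratic form of the diagonal design matrix
  have hquad : ∀ t (θ : Fin d → ℝ), θ ⬝ᵥ (designMatrix x γ t).mulVec θ
      = ∑ i, (γ + s t i) * θ i ^ 2 := by
    intro t θ
    have hdiag : designMatrix x γ t = Matrix.diagonal (fun i => γ + s t i) := by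
      unfold designMatrix
      ext i j
      by_cases h : i = j
      · subst h
        simp [Matrix.sum_apply, Matrix.one_apply, hs_def]
      · simp [Matrix.sum_apply, Matrix.one_apply, Matrix.diagonal_apply_ne _ h, h]
    rw [hdiag]
    simp only [dotProduct, Matrix.mulVec_diagonal]
    apply Finset.sum_congr rfl
    intro i _
    ring
  have hball : ∀ t, ∀ θ ∈ C t, ∑ i, (γ + s t i) * (θ i - θhat t i) ^ 2 ≤ β t := by
    intro t θ hθ
    have h := hC t hθ
    simp only [Set.mem_setOf_eq] at h
    rw [hquad t (θ - θhat t)] at h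
    simpa using h
  -- per-round bound
  have key : ∀ t ∈ Finset.Icc 1 T, (xstar t ⬝ᵥ θstar - x t ⬝ᵥ θstar) ^ 2
      ≤ 4 * β T * ∑ i, x t i / (γ + s t i) := by
    intro t ht
    rw [Finset.mem_Icc] at ht
    obtain ⟨h1, h2⟩ := ht
    obtain ⟨θt, hθtC, hθtopt⟩ := hopt t h1 h2
    set W := ∑ i, (x t i) ^ 2 / (γ + s t i) with hW
    have hW0 : 0 ≤ W := Finset.sum_nonneg fun i _ =>
      div_nonneg (sq_nonneg _) (ha_pos t (by omega) i).le
    have hWx : W = ∑ i, x t i / (γ + s t i) := by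
      apply Finset.sum_congr rfl
      intro i _
      rcases hx01 t h1 h2 i with h | h <;> simp [h]
    have hcs : ∀ v : Fin d → ℝ, (∑ i, (γ + s t i) * v i ^ 2 ≤ β t) →
        ∑ i, x t i * v i ≤ Real.sqrt W * Real.sqrt (β t) := by
      intro v hv
      calc ∑ i, x t i * v i
          ≤ Real.sqrt (∑ i, (x t i) ^ 2 / (γ + s t i)) *
            Real.sqrt (∑ i, (γ + s t i) * v i ^ 2) :=
            aux_cs Finset.univ _ _ _ (fun i _ => ha_pos t (by omega) i)
        _ ≤ Real.sqrt W * Real.sqrt (β t) := by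
            rw [← hW]
            exact mul_le_mul_of_nonneg_left (Real.sqrt_le_sqrt hv) (Real.sqrt_nonneg _)
    have hr0 : 0 ≤ xstar t ⬝ᵥ θstar - x t ⬝ᵥ θstar := by
      have := (hxstar t h1 h2).2 (x t) (hx t h1 h2)
      linarith
    have hrle : xstar t ⬝ᵥ θstar - x t ⬝ᵥ θstar ≤ 2 * (Real.sqrt W * Real.sqrt (β t)) := by
      have h5 : xstar t ⬝ᵥ θstar ≤ x t ⬝ᵥ θt :=
        hθtopt (xstar t) (hxstar t h1 h2).1 θstar (hθstar t h1 h2)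
      have hsplit : x t ⬝ᵥ θt - x t ⬝ᵥ θstar =
          (∑ i, x t i * (θt i - θhat t i)) + (∑ i, x t i * (θhat t i - θstar i)) := by
        simp only [dotProduct, ← Finset.sum_add_distrib, ← Finset.sum_sub_distrib]
        apply Finset.sum_congr rfl
        intro i _
        ring
      have hA : ∑ i, x t i * (θt i - θhat t i) ≤ Real.sqrt W * Real.sqrt (β t) :=
        hcs _ (hball t θt hθtC)
      have hB : ∑ i, x t i * (θhat t i - θstar i) ≤ Real.sqrt W * Real.sqrt (β t) := by
        apply hcs
        have := hball t θstar (hθstar t h1 h2)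
        calc ∑ i, (γ + s t i) * (θhat t i - θstar i) ^ 2
            = ∑ i, (γ + s t i) * (θstar i - θhat t i) ^ 2 := by
              apply Finset.sum_congr rfl; intro i _; ring
          _ ≤ β t := this
      linarith
    calc (xstar t ⬝ᵥ θstar - x t ⬝ᵥ θstar) ^ 2
        ≤ (2 * (Real.sqrt W * Real.sqrt (β t))) ^ 2 := pow_le_pow_left₀ hr0 hrle 2
      _ = 4 * β t * W := by
          rw [mul_pow, mul_pow, Real.sq_sqrt hW0, Real.sq_sqrt (hβ0 t)]
          ring
      _ ≤ 4 * β T * W := by nlinarith [hβT t h2, hW0]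
      _ = 4 * β T * ∑ i, x t i / (γ + s t i) := by rw [hWx]
  -- elliptic potential
  have potential : ∑ t ∈ Finset.Icc 1 T, ∑ i, x t i / (γ + s t i)
      ≤ 2 * d * Real.log (1 + T / γ) := by
    rw [Finset.sum_comm]
    have hper : ∀ i : Fin d, ∑ t ∈ Finset.Icc 1 T, x t i / (γ + s t i)
        ≤ 2 * Real.log (1 + T / γ) := by
      intro i
      have hstep : ∀ t ∈ Finset.Icc 1 T, x t i / (γ + s t i)
          ≤ 2 * (Real.log (γ + s (t+1) i) - Real.log (γ + s t i)) := by
        intro t ht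
        rw [Finset.mem_Icc] at ht
        have hsucc : s (t+1) i = s t i + x t i := by
          simp only [hs_def]
          exact Finset.sum_Ico_succ_top (by omega) _
        rcases hx01 t ht.1 ht.2 i with h | h
        · rw [h] at hsucc
          simp [h, hsucc]
        · rw [h] at hsucc ⊢
          have hlog := aux_log (γ + s t i)
            (by have := hs_nonneg t (by omega) i; linarith)
          rw [hsucc]
          calc (1:ℝ) / (γ + s t i)
              ≤ 2 * (Real.log ((γ + s t i) + 1) - Real.log (γ + s t i)) := hlog
            _ = 2 * (Real.log (γ + (s t i + 1)) - Real.log (γ + s t i)) := by ring_nf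
      calc ∑ t ∈ Finset.Icc 1 T, x t i / (γ + s t i)
          ≤ ∑ t ∈ Finset.Icc 1 T,
              2 * (Real.log (γ + s (t+1) i) - Real.log (γ + s t i)) :=
            Finset.sum_le_sum hstep
        _ = 2 * (Real.log (γ + s (T+1) i) - Real.log (γ + s 1 i)) := by
            rw [← Finset.mul_sum, aux_telescope (fun t => Real.log (γ + s t i)) T]
        _ ≤ 2 * Real.log (1 + T / γ) := by
            have hs1 : s 1 i = 0 := by simp [hs_def]
            have hsT : s (T+1) i ≤ T := by
              calc s (T+1) i ≤ ∑ τ ∈ Finset.Ico 1 (T+1), (1:ℝ) := by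
                    apply Finset.sum_le_sum
                    intro τ hτ
                    rw [Finset.mem_Ico] at hτ
                    rcases hx01 τ hτ.1 (by omega) i with h | h <;> simp [h]
                _ = T := by simp
            have hlog1 : Real.log (γ + s (T+1) i) ≤ Real.log (γ + T) :=
              Real.log_le_log (ha_pos (T+1) le_rfl i) (by linarith)
            have hlog2 : Real.log (γ + T) - Real.log γ = Real.log (1 + T / γ) := by
              rw [show (1:ℝ) + T / γ = (γ + T) / γ by field_simp,
                Real.log_div (by positivity) (ne_of_gt hγ0)]
            rw [hs1, add_zero]
            linarith
    calc ∑ i : Fin d, ∑ t ∈ Finset.Icc 1 T, x t i / (γ + s t i)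
        ≤ ∑ _i : Fin d, 2 * Real.log (1 + T / γ) :=
          Finset.sum_le_sum fun i _ => hper i
      _ = 2 * d * Real.log (1 + T / γ) := by
          rw [Finset.sum_const, Finset.card_univ, Fintype.card_fin, nsmul_eq_mul]
          ring
  calc ∑ t ∈ Finset.Icc 1 T, (xstar t ⬝ᵥ θstar - x t ⬝ᵥ θstar) ^ 2
      ≤ ∑ t ∈ Finset.Icc 1 T, 4 * β T * ∑ i, x t i / (γ + s t i) :=
        Finset.sum_le_sum key
    _ = 4 * β T * ∑ t ∈ Finset.Icc 1 T, ∑ i, x t i / (γ + s t i) := by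
        rw [Finset.mul_sum]
    _ ≤ 4 * β T * (2 * d * Real.log (1 + T / γ)) :=
        mul_le_mul_of_nonneg_left potential (by have := hβ0 T; linarith)
    _ = 8 * β T * d * Real.log (1 + T / γ) := by ring
end

section
/- Under the deterministic OFU setup with horizon T, if θ* ∈ C_t for every t ≤ T, then the cumulative regret satisfies Σ_{t=1}^T r_t ≤ √( 8 d β_T T log( 1 + T/γ ) ). -/
open Matrix Finset

-- Auxiliary lemmas

lemma le_two_log (u : ℝ) (h0 : 0 ≤ u) (h1 : u ≤ 1) : u ≤ 2 * Real.log (1 + u) := by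
  have hpos : (0:ℝ) < 1 + u := by linarith
  have h := Real.one_sub_inv_le_log_of_pos hpos
  have : 1 - (1+u)⁻¹ = u / (1+u) := by field_simp; ring
  rw [this] at h
  have h2 : u / 2 ≤ u / (1+u) :=
    div_le_div_of_nonneg_left h0 hpos (by linarith)
  nlinarith [h, h2]

lemma cs_lemma {d : ℕ} (m xv v : Fin d → ℝ) (B : ℝ)
    (hm : ∀ i, 0 < m i) (hq : ∑ i, m i * v i ^ 2 ≤ B) :
    ∑ i, xv i * v i ≤ Real.sqrt ((∑ i, xv i ^ 2 / m i) * B) := by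
  set f : Fin d → ℝ := fun i => xv i / Real.sqrt (m i)
  set g : Fin d → ℝ := fun i => Real.sqrt (m i) * v i
  have hfg : ∀ i, f i * g i = xv i * v i := by
    intro i
    have hne : Real.sqrt (m i) ≠ 0 := ne_of_gt (Real.sqrt_pos.mpr (hm i))
    simp only [f, g]
    field_simp
  have hf2 : ∀ i, f i ^ 2 = xv i ^ 2 / m i := by
    intro i
    simp only [f, div_pow, Real.sq_sqrt (hm i).le]
  have hg2 : ∀ i, g i ^ 2 = m i * v i ^ 2 := by
    intro i
    simp only [g, mul_pow, Real.sq_sqrt (hm i).le]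
  have key := Finset.sum_mul_sq_le_sq_mul_sq Finset.univ f g
  rw [Finset.sum_congr rfl (fun i _ => hfg i), Finset.sum_congr rfl (fun i _ => hf2 i),
      Finset.sum_congr rfl (fun i _ => hg2 i)] at key
  have hW : 0 ≤ ∑ i, xv i ^ 2 / m i :=
    Finset.sum_nonneg fun i _ => div_nonneg (sq_nonneg _) (hm i).le
  have key2 : (∑ i, xv i * v i) ^ 2 ≤ (∑ i, xv i ^ 2 / m i) * B :=
    key.trans (by apply mul_le_mul_of_nonneg_left hq hW)
  calc ∑ i, xv i * v i ≤ |∑ i, xv i * v i| := le_abs_self _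
    _ = Real.sqrt ((∑ i, xv i * v i) ^ 2) := (Real.sqrt_sq_eq_abs _).symm
    _ ≤ _ := Real.sqrt_le_sqrt key2

lemma telescope (γ : ℝ) (hγ : 1 ≤ γ) (a : ℕ → ℝ) (N : ℕ)
    (h01 : ∀ t, 1 ≤ t → t ≤ N → a t = 0 ∨ a t = 1) :
    ∑ t ∈ Finset.Icc 1 N, a t / (γ + ∑ τ ∈ Finset.Ico 1 t, a τ) ≤
      2 * (Real.log (γ + ∑ τ ∈ Finset.Ico 1 (N+1), a τ) - Real.log γ) := by
  induction N with
  | zero => simp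
  | succ N ih =>
    have h01' : ∀ t, 1 ≤ t → t ≤ N → a t = 0 ∨ a t = 1 :=
      fun t h1 h2 => h01 t h1 (h2.trans (Nat.le_succ N))
    have ha_nonneg : ∀ t, 1 ≤ t → t ≤ N + 1 → 0 ≤ a t := by
      intro t h1 h2; rcases h01 t h1 h2 with h | h <;> simp [h]
    have hS : ∀ t, t ≤ N + 2 → γ ≤ γ + ∑ τ ∈ Finset.Ico 1 t, a τ := by
      intro t ht
      have : 0 ≤ ∑ τ ∈ Finset.Ico 1 t, a τ := by
        apply Finset.sum_nonneg
        intro τ hτ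
        rw [Finset.mem_Ico] at hτ
        exact ha_nonneg τ hτ.1 (by omega)
      linarith
    have hstep : a (N+1) / (γ + ∑ τ ∈ Finset.Ico 1 (N+1), a τ) ≤
        2 * (Real.log (γ + ∑ τ ∈ Finset.Ico 1 (N+2), a τ) -
             Real.log (γ + ∑ τ ∈ Finset.Ico 1 (N+1), a τ)) := by
      set S := γ + ∑ τ ∈ Finset.Ico 1 (N+1), a τ with hSdef
      have hSpos : (0:ℝ) < S := lt_of_lt_of_le (by linarith) (hS (N+1) (by omega))
      have hS1 : (1:ℝ) ≤ S := le_trans hγ (hS (N+1) (by omega))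
      have hsum : ∑ τ ∈ Finset.Ico 1 (N+2), a τ =
          (∑ τ ∈ Finset.Ico 1 (N+1), a τ) + a (N+1) := by
        rw [Finset.sum_Ico_succ_top (by omega)]
      rcases h01 (N+1) (by omega) (le_refl _) with h | h
      · simp [hsum, h, ← hSdef]
      · rw [hsum, h]
        have harg : γ + ((∑ τ ∈ Finset.Ico 1 (N+1), a τ) + 1) = S + 1 := by
          rw [hSdef]; ring
        rw [harg]
        have hlog : Real.log (S + 1) - Real.log S = Real.log (1 + 1/S) := by
          rw [← Real.log_div (by linarith) (ne_of_gt hSpos)]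
          congr 1
          field_simp
        rw [hlog]
        have := le_two_log (1/S) (by positivity) (by
          rw [div_le_one hSpos]; linarith)
        linarith [this]
    rw [Finset.sum_Icc_succ_top (by omega : 1 ≤ N + 1)]
    have := ih h01'
    calc _ ≤ 2 * (Real.log (γ + ∑ τ ∈ Finset.Ico 1 (N+1), a τ) - Real.log γ) +
          a (N+1) / (γ + ∑ τ ∈ Finset.Ico 1 (N+1), a τ) := by linarith
      _ ≤ _ := by
          have h2 := hstep
          have : N + 1 + 1 = N + 2 := rfl
          rw [this]
          linarith

/-- Theorem (deterministic OFU regret bound): in the deterministic OFU setup with horizon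
`T`, if `θ* ∈ C_t` for every `t ≤ T`, then the cumulative regret satisfies
`Σ_{t=1}^T r_t ≤ √(8 d β_T T log(1 + T/γ))`. -/
theorem cumulative_regret_le
    {d : ℕ} (hd : 1 ≤ d) (γ : ℝ) (hγ : 1 ≤ γ)
    (θstar : Fin d → ℝ) (T : ℕ)
    (β : ℕ → ℝ) (hβ0 : ∀ t, 0 ≤ β t) (hβT : ∀ t, t ≤ T → β t ≤ β T)
    -- nonempty action sets of zero-one vectors and the chosen actions
    (Xset : ℕ → Set (Fin d → ℝ))
    (hX01 : ∀ t, Xset t ⊆ {v | ∀ i, v i = 0 ∨ v i = 1})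
    (x : ℕ → Fin d → ℝ) (hx : ∀ t, 1 ≤ t → t ≤ T → x t ∈ Xset t)
    -- confidence sets contained in the `A_t`-ellipsoids of radius `√β_t` around `θ̂_t`
    (θhat : ℕ → Fin d → ℝ) (C : ℕ → Set (Fin d → ℝ))
    (hC : ∀ t, C t ⊆
      {θ | (θ - θhat t) ⬝ᵥ (designMatrix x γ t).mulVec (θ - θhat t) ≤ β t})
    -- the actions are chosen optimistically
    (hopt : ∀ t, 1 ≤ t → t ≤ T →
      ∃ θt ∈ C t, ∀ x' ∈ Xset t, ∀ θ' ∈ C t, x' ⬝ᵥ θ' ≤ x t ⬝ᵥ θt)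
    -- the true parameter lies in every confidence set
    (hθstar : ∀ t, 1 ≤ t → t ≤ T → θstar ∈ C t)
    -- `xstar t` attains `max_{x ∈ X_t} ⟨x, θ*⟩`
    (xstar : ℕ → Fin d → ℝ)
    (hxstar : ∀ t, 1 ≤ t → t ≤ T →
      xstar t ∈ Xset t ∧ ∀ x' ∈ Xset t, x' ⬝ᵥ θstar ≤ xstar t ⬝ᵥ θstar) :
    ∑ t ∈ Finset.Icc 1 T, (xstar t ⬝ᵥ θstar - x t ⬝ᵥ θstar) ≤
      Real.sqrt (8 * d * β T * T * Real.log (1 + T / γ)) := by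
  have hγ0 : (0:ℝ) < γ := by linarith
  -- basic facts about the chosen actions
  have hx01 : ∀ t, 1 ≤ t → t ≤ T → ∀ i, x t i = 0 ∨ x t i = 1 :=
    fun t h1 h2 i => hX01 t (hx t h1 h2) i
  have hxnn : ∀ t, 1 ≤ t → t ≤ T → ∀ i, 0 ≤ x t i := by
    intro t h1 h2 i; rcases hx01 t h1 h2 i with h | h <;> simp [h]
  -- the diagonal entries of the design matrix
  set m : ℕ → Fin d → ℝ := fun t i => γ + ∑ τ ∈ Finset.Ico 1 t, x τ i with hmdef
  have hm : ∀ t, t ≤ T + 1 → ∀ i, 0 < m t i := by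
    intro t ht i
    have : 0 ≤ ∑ τ ∈ Finset.Ico 1 t, x τ i := by
      apply Finset.sum_nonneg
      intro τ hτ
      rw [Finset.mem_Ico] at hτ
      exact hxnn τ hτ.1 (by omega) i
    simp only [hmdef]; linarith
  -- the design matrix is diagonal with entries `m t`
  have hdiag : ∀ t, designMatrix x γ t = Matrix.diagonal (m t) := by
    intro t
    unfold designMatrix
    ext i j
    by_cases h : i = j <;>
      simp [Matrix.sum_apply, Matrix.diagonal_apply, Matrix.one_apply, h, hmdef,
        Finset.mul_sum]
  have hquad : ∀ t (v : Fin d → ℝ),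
      v ⬝ᵥ (designMatrix x γ t).mulVec v = ∑ i, m t i * v i ^ 2 := by
    intro t v
    rw [hdiag]
    simp only [dotProduct, Matrix.mulVec_diagonal]
    exact Finset.sum_congr rfl fun i _ => by ring
  -- the width at each round
  set w : ℕ → ℝ := fun t => ∑ i, (x t i) ^ 2 / m t i with hwdef
  have hwnn : ∀ t, t ≤ T → 0 ≤ w t := by
    intro t ht
    apply Finset.sum_nonneg
    intro i _
    exact div_nonneg (sq_nonneg _) (hm t (by omega) i).le
  -- per-round regret bound
  have hround : ∀ t, 1 ≤ t → t ≤ T →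
      xstar t ⬝ᵥ θstar - x t ⬝ᵥ θstar ≤
        2 * (Real.sqrt (w t) * Real.sqrt (β T)) := by
    intro t h1 h2
    obtain ⟨θt, hθtC, hoptt⟩ := hopt t h1 h2
    have hopt1 : xstar t ⬝ᵥ θstar ≤ x t ⬝ᵥ θt :=
      hoptt (xstar t) (hxstar t h1 h2).1 θstar (hθstar t h1 h2)
    have hq1 : ∑ i, m t i * (θt i - θhat t i) ^ 2 ≤ β T := by
      have := hC t hθtC
      rw [Set.mem_setOf_eq, hquad t] at this
      exact le_trans (le_of_eq (Finset.sum_congr rfl fun i _ => by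
        simp [Pi.sub_apply])) (le_trans this (hβT t h2))
    have hq2 : ∑ i, m t i * (θhat t i - θstar i) ^ 2 ≤ β T := by
      have := hC t (hθstar t h1 h2)
      rw [Set.mem_setOf_eq, hquad t] at this
      exact le_trans (le_of_eq (Finset.sum_congr rfl fun i _ => by
        simp only [Pi.sub_apply]; ring)) (le_trans this (hβT t h2))
    have c1 := cs_lemma (m t) (x t) (fun i => θt i - θhat t i) (β T)
      (hm t (by omega)) hq1
    have c2 := cs_lemma (m t) (x t) (fun i => θhat t i - θstar i) (β T)
      (hm t (by omega)) hq2
    have hsplit : x t ⬝ᵥ θt - x t ⬝ᵥ θstar =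
        (∑ i, x t i * (θt i - θhat t i)) + ∑ i, x t i * (θhat t i - θstar i) := by
      simp only [dotProduct]
      rw [← Finset.sum_add_distrib, ← Finset.sum_sub_distrib]
      exact Finset.sum_congr rfl fun i _ => by ring
    have hsq : Real.sqrt (w t * β T) = Real.sqrt (w t) * Real.sqrt (β T) :=
      Real.sqrt_mul (hwnn t h2) _
    rw [← hsq]
    calc xstar t ⬝ᵥ θstar - x t ⬝ᵥ θstar ≤ x t ⬝ᵥ θt - x t ⬝ᵥ θstar := by linarith
      _ = _ := hsplit
      _ ≤ Real.sqrt (w t * β T) + Real.sqrt (w t * β T) := add_le_add c1 c2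
      _ = 2 * Real.sqrt (w t * β T) := by ring
  -- sum up and apply Cauchy–Schwarz over rounds
  have hsum1 : ∑ t ∈ Finset.Icc 1 T, (xstar t ⬝ᵥ θstar - x t ⬝ᵥ θstar) ≤
      2 * Real.sqrt (β T) * ∑ t ∈ Finset.Icc 1 T, Real.sqrt (w t) := by
    rw [Finset.mul_sum]
    apply Finset.sum_le_sum
    intro t ht
    rw [Finset.mem_Icc] at ht
    have := hround t ht.1 ht.2
    linarith
  have hCS2 : ∑ t ∈ Finset.Icc 1 T, Real.sqrt (w t) ≤
      Real.sqrt (T * ∑ t ∈ Finset.Icc 1 T, w t) := by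
    have key := Finset.sum_mul_sq_le_sq_mul_sq (Finset.Icc 1 T)
      (fun _ => (1:ℝ)) (fun t => Real.sqrt (w t))
    simp only [one_mul, one_pow] at key
    have hcard : ∑ _t ∈ Finset.Icc 1 T, (1:ℝ) = T := by
      simp [Nat.card_Icc]
    have hsq : ∀ t ∈ Finset.Icc 1 T, Real.sqrt (w t) ^ 2 = w t := by
      intro t ht
      rw [Finset.mem_Icc] at ht
      exact Real.sq_sqrt (hwnn t ht.2)
    rw [hcard, Finset.sum_congr rfl hsq] at key
    have hnn : 0 ≤ ∑ t ∈ Finset.Icc 1 T, Real.sqrt (w t) :=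
      Finset.sum_nonneg fun t _ => Real.sqrt_nonneg _
    calc ∑ t ∈ Finset.Icc 1 T, Real.sqrt (w t)
        = Real.sqrt ((∑ t ∈ Finset.Icc 1 T, Real.sqrt (w t)) ^ 2) := by
          rw [Real.sqrt_sq hnn]
      _ ≤ _ := Real.sqrt_le_sqrt key
  -- elliptical potential bound
  set L : ℝ := Real.log (1 + T / γ) with hLdef
  have hL0 : 0 ≤ L := Real.log_nonneg (by
    have : (0:ℝ) ≤ T / γ := div_nonneg (Nat.cast_nonneg T) hγ0.le
    linarith)
  have hpot : ∑ t ∈ Finset.Icc 1 T, w t ≤ d * (2 * L) := by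
    have hswap : ∑ t ∈ Finset.Icc 1 T, w t =
        ∑ i, ∑ t ∈ Finset.Icc 1 T, (x t i) ^ 2 / m t i := by
      rw [hwdef]; exact Finset.sum_comm
    rw [hswap]
    have hper : ∀ i : Fin d, ∑ t ∈ Finset.Icc 1 T, (x t i) ^ 2 / m t i ≤ 2 * L := by
      intro i
      have hstep1 : ∑ t ∈ Finset.Icc 1 T, (x t i) ^ 2 / m t i =
          ∑ t ∈ Finset.Icc 1 T, x t i / (γ + ∑ τ ∈ Finset.Ico 1 t, x τ i) := by
        apply Finset.sum_congr rfl
        intro t ht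
        rw [Finset.mem_Icc] at ht
        rcases hx01 t ht.1 ht.2 i with h | h <;> simp [hmdef, h]
      rw [hstep1]
      have htel := telescope γ hγ (fun τ => x τ i) T
        (fun t h1 h2 => hx01 t h1 h2 i)
      have hub : γ + ∑ τ ∈ Finset.Ico 1 (T+1), x τ i ≤ γ + T := by
        have : ∑ τ ∈ Finset.Ico 1 (T+1), x τ i ≤ ∑ _τ ∈ Finset.Ico 1 (T+1), (1:ℝ) := by
          apply Finset.sum_le_sum
          intro τ hτ
          rw [Finset.mem_Ico] at hτ
          rcases hx01 τ hτ.1 (by omega) i with h | h <;> simp [h]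
        have hone : ∑ _τ ∈ Finset.Ico 1 (T+1), (1:ℝ) = T := by
          simp [Nat.card_Ico]
        linarith [this, le_of_eq hone]
      have hpos : (0:ℝ) < γ + ∑ τ ∈ Finset.Ico 1 (T+1), x τ i := by
        have := hm (T+1) le_rfl i
        simpa [hmdef] using this
      have hlog1 : Real.log (γ + ∑ τ ∈ Finset.Ico 1 (T+1), x τ i) ≤
          Real.log (γ + T) := Real.log_le_log hpos hub
      have hlog2 : Real.log (γ + T) - Real.log γ = L := by
        rw [hLdef, show (1:ℝ) + T / γ = (γ + T) / γ by field_simp,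
          Real.log_div (by positivity) (ne_of_gt hγ0)]
      linarith
    calc ∑ i : Fin d, ∑ t ∈ Finset.Icc 1 T, (x t i) ^ 2 / m t i
        ≤ ∑ _i : Fin d, 2 * L := Finset.sum_le_sum fun i _ => hper i
      _ = d * (2 * L) := by simp [mul_comm]
  -- combine everything
  have hβTnn : 0 ≤ β T := hβ0 T
  have hSnn : (0:ℝ) ≤ (T:ℝ) * (d * (2 * L)) := by positivity
  have hfinal : 2 * Real.sqrt (β T) * Real.sqrt (T * (d * (2 * L))) =
      Real.sqrt (8 * d * β T * T * L) := by
    rw [show (8:ℝ) * d * β T * T * L =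
        (2 * Real.sqrt (β T) * Real.sqrt ((T:ℝ) * (d * (2 * L)))) ^ 2 by
      rw [mul_pow, mul_pow, Real.sq_sqrt hβTnn, Real.sq_sqrt hSnn]; ring]
    rw [Real.sqrt_sq (by positivity)]
  calc ∑ t ∈ Finset.Icc 1 T, (xstar t ⬝ᵥ θstar - x t ⬝ᵥ θstar)
      ≤ 2 * Real.sqrt (β T) * ∑ t ∈ Finset.Icc 1 T, Real.sqrt (w t) := hsum1
    _ ≤ 2 * Real.sqrt (β T) * Real.sqrt (T * ∑ t ∈ Finset.Icc 1 T, w t) := by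
        apply mul_le_mul_of_nonneg_left hCS2 (by positivity)
    _ ≤ 2 * Real.sqrt (β T) * Real.sqrt (T * (d * (2 * L))) := by
        apply mul_le_mul_of_nonneg_left _ (by positivity)
        apply Real.sqrt_le_sqrt
        exact mul_le_mul_of_nonneg_left hpot (Nat.cast_nonneg T)
    _ = _ := hfinal
end

section
/- Fix N, M, R ≥ 1 and 0 < ε ≤ 1, and let S = { Θ ∈ ℝ^{N×M} : rank(Θ) ≤ R and ‖Θ‖_F ≤ 1 }. There exists a finite set S^ε ⊆ ℝ^{N×M} with cardinality |S^ε| ≤ (9/ε)^{(N+M+1)R} such that for every Θ ∈ S there exists Θ̄ ∈ S^ε with ‖Θ − Θ̄‖_F ≤ ε. -/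
open Finset

/-- Frobenius norm of a real matrix, `‖Θ‖_F = √(Σ_{u,i} θ_{ui}²)`. -/
noncomputable def frobNorm {N M : ℕ} (Θ : Matrix (Fin N) (Fin M) ℝ) : ℝ :=
  Real.sqrt (∑ u, ∑ i, Θ u i ^ 2)

section NetAux
open MeasureTheory Metric Set Finset
open scoped ENNReal NNReal

/-- Volumetric bound: a `δ`-separated finite subset of the unit ball has at most `(3/δ)^dim`
elements. -/
lemma sep_card_bound {E : Type*} [NormedAddCommGroup E] [NormedSpace ℝ E] [MeasurableSpace E]
    [BorelSpace E] [FiniteDimensional ℝ E] {δ : ℝ} (hδ0 : 0 < δ) (hδ1 : δ ≤ 1)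
    (F : Finset E) (hFball : ∀ x ∈ F, ‖x‖ ≤ 1)
    (hsep : ∀ x ∈ F, ∀ y ∈ F, x ≠ y → δ < dist x y) :
    (F.card : ℝ) ≤ (3 / δ) ^ (Module.finrank ℝ E) := by
  classical
  set μ : Measure E := (Module.finBasis ℝ E).addHaar with hμ
  haveI : μ.IsAddHaarMeasure := by rw [hμ]; infer_instance
  set d := Module.finrank ℝ E with hd
  have hB0 : 0 < μ (ball (0:E) 1) := measure_ball_pos μ _ one_pos
  have hBtop : μ (ball (0:E) 1) < ⊤ := measure_ball_lt_top
  have hδ2 : (0:ℝ) < δ / 2 := by linarith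
  -- disjoint balls
  have hdisj : (F : Set E).PairwiseDisjoint (fun y => ball y (δ / 2)) := by
    intro x hx y hy hxy
    apply ball_disjoint_ball
    calc δ / 2 + δ / 2 = δ := by ring
    _ ≤ dist x y := (hsep x hx y hy hxy).le
  have hunion : (⋃ y ∈ F, ball y (δ / 2)) ⊆ ball (0:E) (1 + δ / 2) := by
    intro z hz
    simp only [Set.mem_iUnion] at hz
    obtain ⟨y, hy, hz⟩ := hz
    have := hFball y hy
    rw [mem_ball] at hz ⊢
    calc dist z 0 ≤ dist z y + dist y 0 := dist_triangle _ _ _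
      _ < δ / 2 + 1 := by rw [dist_zero_right] at *; linarith
      _ = 1 + δ / 2 := by ring
  have hmeas : μ (⋃ y ∈ F, ball y (δ / 2)) = F.card * (ENNReal.ofReal ((δ/2) ^ d) * μ (ball 0 1)) := by
    rw [measure_biUnion_finset hdisj (fun y _ => measurableSet_ball)]
    rw [Finset.sum_congr rfl (fun y _ => μ.addHaar_ball_of_pos y hδ2)]
    rw [Finset.sum_const, nsmul_eq_mul]
  have hle : (F.card : ℝ≥0∞) * (ENNReal.ofReal ((δ/2) ^ d) * μ (ball 0 1))
      ≤ ENNReal.ofReal ((1 + δ/2) ^ d) * μ (ball 0 1) := by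
    rw [← hmeas, ← μ.addHaar_ball_of_pos (0:E) (by linarith : (0:ℝ) < 1 + δ/2)]
    exact measure_mono hunion
  -- convert to reals
  have hB0' : μ (ball (0:E) 1) ≠ 0 := hB0.ne'
  have hBtop' : μ (ball (0:E) 1) ≠ ⊤ := hBtop.ne
  have hle2 : (F.card : ℝ≥0∞) * ENNReal.ofReal ((δ/2) ^ d) ≤ ENNReal.ofReal ((1 + δ/2) ^ d) := by
    rw [← mul_assoc] at hle
    exact (ENNReal.mul_le_mul_iff_left hB0' hBtop').mp hle
  have hpow : (0:ℝ) < (δ/2) ^ d := pow_pos hδ2 _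
  have hreal : (F.card : ℝ) * ((δ/2) ^ d) ≤ (1 + δ/2) ^ d := by
    have := ENNReal.toReal_mono (by finiteness) hle2
    rw [ENNReal.toReal_mul, ENNReal.toReal_ofReal hpow.le, ENNReal.toReal_ofReal
      (by positivity)] at this
    simpa using this
  have : (F.card : ℝ) ≤ ((1 + δ/2) / (δ/2)) ^ d := by
    rw [div_pow, le_div_iff₀ hpow]
    exact hreal
  refine this.trans (pow_le_pow_left₀ (by positivity) ?_ _)
  rw [div_le_div_iff₀ hδ2 hδ0]
  nlinarith

/-- Existence of a `δ`-net of `T ⊆ closedBall 0 1` with points in `T` and card `≤ (3/δ)^dim`. -/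
lemma exists_net {E : Type*} [NormedAddCommGroup E] [NormedSpace ℝ E] [MeasurableSpace E]
    [BorelSpace E] [FiniteDimensional ℝ E] {δ : ℝ} (hδ0 : 0 < δ) (hδ1 : δ ≤ 1)
    (T : Set E) (hT : ∀ x ∈ T, ‖x‖ ≤ 1) :
    ∃ F : Finset E, ↑F ⊆ T ∧ (F.card : ℝ) ≤ (3 / δ) ^ (Module.finrank ℝ E) ∧
      ∀ x ∈ T, ∃ y ∈ F, ‖x - y‖ ≤ δ := by
  classical
  set P : Finset E → Prop := fun F => ↑F ⊆ T ∧ ∀ x ∈ F, ∀ y ∈ F, x ≠ y → δ < dist x y with hP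
  have hcard : ∀ F, P F → (F.card : ℝ) ≤ (3 / δ) ^ (Module.finrank ℝ E) := by
    intro F hF
    exact sep_card_bound hδ0 hδ1 F (fun x hx => hT x (hF.1 hx)) hF.2
  set S : Set ℕ := {n | ∃ F, P F ∧ F.card = n} with hS
  have hne : S.Nonempty := ⟨0, ∅, ⟨by simp, by simp⟩, rfl⟩
  have hbdd : BddAbove S := by
    refine ⟨Nat.floor ((3 / δ) ^ (Module.finrank ℝ E)), ?_⟩
    rintro n ⟨F, hF, rfl⟩
    exact Nat.le_floor (hcard F hF)
  obtain ⟨F, hF, hFcard⟩ := Nat.sSup_mem hne hbdd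
  refine ⟨F, hF.1, hcard F hF, ?_⟩
  intro x hx
  by_contra h
  push_neg at h
  have hxF : x ∉ F := fun hxF => by
    have := h x hxF; simp at this; linarith
  have hP' : P (insert x F) := by
    constructor
    · intro z hz
      rw [Finset.coe_insert] at hz
      rcases hz with rfl | hz
      · exact hx
      · exact hF.1 hz
    · intro a ha b hb hab
      rw [Finset.mem_insert] at ha hb
      rcases ha with rfl | ha
      · rcases hb with rfl | hb
        · exact absurd rfl hab
        · have := h b hb; rw [dist_eq_norm]; linarith
      · rcases hb with rfl | hb
        · have := h a ha; rw [dist_comm, dist_eq_norm]; linarith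
        · exact hF.2 a ha b hb hab
  have : (insert x F).card ≤ sSup S := le_csSup hbdd ⟨_, hP', rfl⟩
  rw [Finset.card_insert_of_notMem hxF, hFcard] at this
  omega

end NetAux

section FrobAux
open Finset

lemma expand_sq {R N M : ℕ} (c : Fin R → ℝ) (x : Fin R → Fin N → ℝ) (y : Fin R → Fin M → ℝ)
    (h : ∀ j k, j ≠ k → (∑ a, x j a * x k a) * (∑ b, y j b * y k b) = 0) :
    ∑ u, ∑ i, (∑ k, c k * x k u * y k i) ^ 2
      = ∑ k, c k ^ 2 * ((∑ a, x k a ^ 2) * (∑ b, y k b ^ 2)) := by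
  have key : ∀ u i, (∑ k, c k * x k u * y k i) ^ 2
      = ∑ j, ∑ k, (c j * c k) * ((x j u * x k u) * (y j i * y k i)) := by
    intro u i
    rw [sq, Finset.sum_mul_sum]
    exact Finset.sum_congr rfl fun j _ => Finset.sum_congr rfl fun k _ => by ring
  simp only [key]
  calc ∑ u, ∑ i, ∑ j, ∑ k, (c j * c k) * ((x j u * x k u) * (y j i * y k i))
      = ∑ u, ∑ j, ∑ i, ∑ k, (c j * c k) * ((x j u * x k u) * (y j i * y k i)) :=
        Finset.sum_congr rfl fun u _ => Finset.sum_comm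
    _ = ∑ j, ∑ u, ∑ i, ∑ k, (c j * c k) * ((x j u * x k u) * (y j i * y k i)) :=
        Finset.sum_comm
    _ = ∑ j, ∑ u, ∑ k, ∑ i, (c j * c k) * ((x j u * x k u) * (y j i * y k i)) :=
        Finset.sum_congr rfl fun j _ => Finset.sum_congr rfl fun u _ => Finset.sum_comm
    _ = ∑ j, ∑ k, ∑ u, ∑ i, (c j * c k) * ((x j u * x k u) * (y j i * y k i)) :=
        Finset.sum_congr rfl fun j _ => Finset.sum_comm
    _ = ∑ j, ∑ k, (c j * c k) * ((∑ a, x j a * x k a) * (∑ b, y j b * y k b)) := by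
        refine Finset.sum_congr rfl fun j _ => Finset.sum_congr rfl fun k _ => ?_
        rw [Finset.sum_mul_sum, Finset.mul_sum]
        refine Finset.sum_congr rfl fun u _ => ?_
        rw [Finset.mul_sum]
    _ = ∑ k, c k ^ 2 * ((∑ a, x k a ^ 2) * (∑ b, y k b ^ 2)) := by
        refine Finset.sum_congr rfl fun j _ => ?_
        rw [Finset.sum_eq_single_of_mem j (Finset.mem_univ j)]
        · simp only [← sq]
        · intro k _ hk
          rw [h j k (Ne.symm hk), mul_zero]
  done

noncomputable def toE {N M : ℕ} (C : Matrix (Fin N) (Fin M) ℝ) :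
    EuclideanSpace ℝ (Fin N × Fin M) :=
  (WithLp.equiv 2 ((Fin N × Fin M) → ℝ)).symm (fun p => C p.1 p.2)

lemma frobNorm_eq_norm {N M : ℕ} (C : Matrix (Fin N) (Fin M) ℝ) : frobNorm C = ‖toE C‖ := by
  rw [EuclideanSpace.norm_eq, frobNorm]
  congr 1
  rw [Fintype.sum_prod_type]
  refine Finset.sum_congr rfl fun u _ => Finset.sum_congr rfl fun i _ => ?_
  rw [Real.norm_eq_abs, sq_abs]
  rfl

lemma frobNorm_tri {N M : ℕ} (A B : Matrix (Fin N) (Fin M) ℝ) :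
    frobNorm (A + B) ≤ frobNorm A + frobNorm B := by
  have : toE (A + B) = toE A + toE B := rfl
  rw [frobNorm_eq_norm, frobNorm_eq_norm, frobNorm_eq_norm, this]
  exact norm_add_le _ _

end FrobAux

section SvdAux
open Finset Matrix

lemma exists_svd {N M R : ℕ} (Θ : Matrix (Fin N) (Fin M) ℝ) (hrank : Θ.rank ≤ R)
    (hfrob : ∑ t, ∑ b, Θ t b ^ 2 ≤ 1) :
    ∃ (σ : Fin R → ℝ) (u : Fin R → Fin N → ℝ) (v : Fin R → Fin M → ℝ),
      (∑ k, σ k ^ 2 ≤ 1) ∧ (∀ k, ∑ a, u k a ^ 2 ≤ 1) ∧ (∀ k, ∑ b, v k b ^ 2 ≤ 1) ∧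
      (∀ j k, j ≠ k → ∑ a, u j a * u k a = 0) ∧
      (∀ j k, j ≠ k → ∑ b, v j b * v k b = 0) ∧
      (∀ a b, Θ a b = ∑ k, σ k * u k a * v k b) := by
  have hA : (Θᴴ * Θ).IsHermitian := Matrix.isHermitian_conjTranspose_mul_self Θ
  set A := Θᴴ * Θ with hAdef
  set d : Fin M → ℝ := hA.eigenvalues with hddef
  set w : Fin M → Fin M → ℝ := fun i => hA.eigenvectorBasis i with hwdef
  have hA_apply : ∀ a b, A a b = ∑ t, Θ t a * Θ t b := by
    intro a b; simp [hAdef, Matrix.mul_apply, Matrix.conjTranspose_apply]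
  have horth : ∀ i j, ∑ a, w i a * w j a = if i = j then 1 else 0 := by
    have h := hA.eigenvectorBasis.orthonormal
    rw [orthonormal_iff_ite] at h
    intro i j
    have h2 := h i j
    simp only [PiLp.inner_apply, RCLike.inner_apply, conj_trivial] at h2
    rw [← h2]; exact Finset.sum_congr rfl fun a _ => mul_comm _ _
  have hcomp : ∀ a b, ∑ i, w i a * w i b = if a = b then 1 else 0 := by
    have hu : (hA.eigenvectorUnitary : Matrix (Fin M) (Fin M) ℝ) *
        star (hA.eigenvectorUnitary : Matrix (Fin M) (Fin M) ℝ) = 1 :=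
      Matrix.mem_unitaryGroup_iff.mp (hA.eigenvectorUnitary).2
    intro a b
    have h2 := congrFun (congrFun hu a) b
    simp only [Matrix.mul_apply, Matrix.star_apply, star_trivial, Matrix.one_apply,
      Matrix.IsHermitian.eigenvectorUnitary_apply] at h2
    exact h2
  have heig : ∀ i a, ∑ b, A a b * w i b = d i * w i a := by
    intro i a
    have h := congrFun (hA.mulVec_eigenvectorBasis i) a
    simpa [Matrix.mulVec, dotProduct] using h
  have hd0 : ∀ i, 0 ≤ d i := fun i => Matrix.eigenvalues_conjTranspose_mul_self_nonneg Θ i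
  -- the vectors z i = Θ *ᵥ w i
  set z : Fin M → Fin N → ℝ := fun i a => ∑ b, Θ a b * w i b with hzdef
  have hzz : ∀ i j, ∑ a, z i a * z j a = d j * (if i = j then 1 else 0) := by
    intro i j
    calc ∑ a, z i a * z j a
        = ∑ a, ∑ b, ∑ b', (Θ a b * w i b) * (Θ a b' * w j b') := by
          refine Finset.sum_congr rfl fun a _ => ?_
          rw [hzdef]; rw [Finset.sum_mul_sum]
      _ = ∑ b, ∑ a, ∑ b', (Θ a b * w i b) * (Θ a b' * w j b') := Finset.sum_comm
      _ = ∑ b, ∑ b', ∑ a, (Θ a b * w i b) * (Θ a b' * w j b') :=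
          Finset.sum_congr rfl fun b _ => Finset.sum_comm
      _ = ∑ b, ∑ b', (w i b * w j b') * ∑ a, Θ a b * Θ a b' := by
          refine Finset.sum_congr rfl fun b _ => Finset.sum_congr rfl fun b' _ => ?_
          rw [Finset.mul_sum]
          exact Finset.sum_congr rfl fun a _ => by ring
      _ = ∑ b, ∑ b', (w i b * w j b') * A b b' := by
          refine Finset.sum_congr rfl fun b _ => Finset.sum_congr rfl fun b' _ => ?_
          rw [hA_apply]
      _ = ∑ b, w i b * (∑ b', A b b' * w j b') := by
          refine Finset.sum_congr rfl fun b _ => ?_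
          rw [Finset.mul_sum]
          exact Finset.sum_congr rfl fun b' _ => by ring
      _ = ∑ b, w i b * (d j * w j b) := by
          refine Finset.sum_congr rfl fun b _ => ?_
          rw [heig]
      _ = d j * ∑ b, w i b * w j b := by
          rw [Finset.mul_sum]
          exact Finset.sum_congr rfl fun b _ => by ring
      _ = d j * (if i = j then 1 else 0) := by rw [horth]
  have hzsq : ∀ i, ∑ a, z i a ^ 2 = d i := by
    intro i
    have h := hzz i i
    rw [if_pos rfl, mul_one] at h
    rw [← h]
    exact Finset.sum_congr rfl fun a _ => sq (z i a)
  have hdecomp : ∀ a b, Θ a b = ∑ i, z i a * w i b := by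
    intro a b
    symm
    calc ∑ i, z i a * w i b
        = ∑ i, ∑ b', (Θ a b' * w i b') * w i b := by
          refine Finset.sum_congr rfl fun i _ => ?_
          rw [hzdef, Finset.sum_mul]
      _ = ∑ b', ∑ i, (Θ a b' * w i b') * w i b := Finset.sum_comm
      _ = ∑ b', Θ a b' * ∑ i, w i b' * w i b := by
          refine Finset.sum_congr rfl fun b' _ => ?_
          rw [Finset.mul_sum]
          exact Finset.sum_congr rfl fun i _ => by ring
      _ = ∑ b', Θ a b' * (if b' = b then 1 else 0) := by
          refine Finset.sum_congr rfl fun b' _ => ?_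
          rw [hcomp]
      _ = Θ a b := by simp
  have hsum_d : ∑ i, d i ≤ 1 := by
    have key : ∑ i, d i = ∑ b, A b b := by
      calc ∑ i, d i
          = ∑ i, d i * ∑ b, w i b * w i b := by
            refine Finset.sum_congr rfl fun i _ => ?_
            have h1 := horth i i
            rw [if_pos rfl] at h1
            rw [h1, mul_one]
        _ = ∑ i, ∑ b, w i b * (d i * w i b) := by
            refine Finset.sum_congr rfl fun i _ => ?_
            rw [Finset.mul_sum]
            exact Finset.sum_congr rfl fun b _ => by ring
        _ = ∑ i, ∑ b, w i b * ∑ b', A b b' * w i b' := by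
            refine Finset.sum_congr rfl fun i _ => Finset.sum_congr rfl fun b _ => ?_
            rw [heig i b]
        _ = ∑ b, ∑ i, w i b * ∑ b', A b b' * w i b' := Finset.sum_comm
        _ = ∑ b, ∑ b', A b b' * ∑ i, w i b * w i b' := by
            refine Finset.sum_congr rfl fun b _ => ?_
            calc ∑ i, w i b * ∑ b', A b b' * w i b'
                = ∑ i, ∑ b', w i b * (A b b' * w i b') := by
                  refine Finset.sum_congr rfl fun i _ => ?_
                  rw [Finset.mul_sum]
              _ = ∑ b', ∑ i, w i b * (A b b' * w i b') := Finset.sum_comm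
              _ = ∑ b', A b b' * ∑ i, w i b * w i b' := by
                  refine Finset.sum_congr rfl fun b' _ => ?_
                  rw [Finset.mul_sum]
                  exact Finset.sum_congr rfl fun i _ => by ring
        _ = ∑ b, ∑ b', A b b' * (if b = b' then 1 else 0) := by
            refine Finset.sum_congr rfl fun b _ => Finset.sum_congr rfl fun b' _ => ?_
            rw [hcomp]
        _ = ∑ b, A b b := by simp
    rw [key]
    calc ∑ b, A b b = ∑ b, ∑ t, Θ t b * Θ t b := Finset.sum_congr rfl fun b _ => hA_apply b b
      _ = ∑ t, ∑ b, Θ t b ^ 2 := by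
          rw [Finset.sum_comm]
          exact Finset.sum_congr rfl fun t _ => Finset.sum_congr rfl fun b _ => (sq _).symm
      _ ≤ 1 := hfrob
  classical
  have hcard : Fintype.card {i // d i ≠ 0} ≤ R := by
    have h1 : A.rank = Fintype.card {i // d i ≠ 0} := hA.rank_eq_card_non_zero_eigs
    rw [← h1, hAdef, Matrix.rank_conjTranspose_mul_self Θ]
    exact hrank
  obtain ⟨e⟩ : Nonempty ({i // d i ≠ 0} ↪ Fin R) :=
    Function.Embedding.nonempty_of_card_le (by rwa [Fintype.card_fin])
  set p : Fin R → Prop := fun k => ∃ i : {i // d i ≠ 0}, e i = k with hpdef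
  have hpe : ∀ i : {i // d i ≠ 0}, p (e i) := fun i => ⟨i, rfl⟩
  have hval : ∀ i : {i // d i ≠ 0}, (hpe i).choose = i :=
    fun i => e.injective (hpe i).choose_spec
  set σ : Fin R → ℝ := fun k => if h : p k then Real.sqrt (d ((h.choose : {i // d i ≠ 0}) : Fin M)) else 0 with hσdef
  set v : Fin R → Fin M → ℝ := fun k => if h : p k then w ((h.choose : {i // d i ≠ 0}) : Fin M) else 0 with hvdef
  set u : Fin R → Fin N → ℝ := fun k =>
    if h : p k then (fun a => z ((h.choose : {i // d i ≠ 0}) : Fin M) a /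
      Real.sqrt (d ((h.choose : {i // d i ≠ 0}) : Fin M))) else 0 with hudef
  have hsum_reindex : ∀ (f : Fin R → ℝ), (∀ k, ¬ p k → f k = 0) →
      ∑ k, f k = ∑ i : {i // d i ≠ 0}, f (e i) := by
    intro f hf
    have h1 : ∑ k ∈ Finset.univ.map e, f k = ∑ i : {i // d i ≠ 0}, f (e i) :=
      Finset.sum_map Finset.univ e f
    have h2 : ∑ k ∈ Finset.univ.map e, f k = ∑ k, f k := by
      refine Finset.sum_subset (Finset.subset_univ _) ?_
      intro k _ hk
      refine hf k ?_
      rintro ⟨i, hi⟩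
      exact hk (Finset.mem_map.mpr ⟨i, Finset.mem_univ _, hi⟩)
    rw [← h2, h1]
  have hsubsum : ∀ (g : Fin M → ℝ), ∑ i : {i // d i ≠ 0}, g i
      = ∑ i ∈ Finset.univ.filter (fun i => d i ≠ 0), g i :=
    fun g => (Finset.sum_subtype _ (by simp) g).symm
  have hdpos : ∀ i : {i // d i ≠ 0}, 0 < d i :=
    fun i => lt_of_le_of_ne (hd0 i) (Ne.symm i.2)
  have hsqrt_ne : ∀ i : {i // d i ≠ 0}, Real.sqrt (d i) ≠ 0 :=
    fun i => ne_of_gt (Real.sqrt_pos.mpr (hdpos i))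
  have hz0 : ∀ i, d i = 0 → ∀ a, z i a = 0 := by
    intro i hi a
    have h1 : ∑ a, z i a ^ 2 = 0 := by rw [hzsq i, hi]
    have h2 := (Finset.sum_eq_zero_iff_of_nonneg (fun a _ => sq_nonneg (z i a))).mp h1 a
      (Finset.mem_univ a)
    exact (pow_eq_zero_iff two_ne_zero).mp h2
  refine ⟨σ, u, v, ?_, ?_, ?_, ?_, ?_, ?_⟩
  · -- ∑ σ² ≤ 1
    have h1 : ∑ k, σ k ^ 2 = ∑ i : {i // d i ≠ 0}, d i := by
      rw [hsum_reindex (fun k => σ k ^ 2) (fun k hk => by simp [hσdef, dif_neg hk])]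
      refine Fintype.sum_congr _ _ fun i => ?_
      simp only [hσdef]
      rw [dif_pos (hpe i), hval i, Real.sq_sqrt (hd0 i)]
    rw [h1, hsubsum]
    refine le_trans (Finset.sum_le_sum_of_subset_of_nonneg (Finset.filter_subset _ _)
      (fun i _ _ => hd0 i)) hsum_d
  · -- u norms
    intro k
    by_cases h : p k
    · simp only [hudef]
      rw [dif_pos h]
      set i := h.choose with hidef
      have : ∑ a, (z (i : Fin M) a / Real.sqrt (d i)) ^ 2 = (∑ a, z (i : Fin M) a ^ 2) / d i := by
        rw [Finset.sum_div]
        refine Finset.sum_congr rfl fun a _ => ?_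
        rw [div_pow, Real.sq_sqrt (hd0 i)]
      rw [this, hzsq, div_self i.2]
    · simp [hudef, dif_neg h]
  · -- v norms
    intro k
    by_cases h : p k
    · simp only [hvdef]
      rw [dif_pos h]
      set i := h.choose with hidef
      have h1 := horth (i : Fin M) (i : Fin M)
      rw [if_pos rfl] at h1
      have : ∑ b, w (i : Fin M) b ^ 2 = ∑ b, w (i : Fin M) b * w (i : Fin M) b :=
        Finset.sum_congr rfl fun b _ => sq _
      rw [this, h1]
    · simp [hvdef, dif_neg h]
  · -- u orthogonality
    intro j k hjk
    by_cases hj : p j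
    · by_cases hk : p k
      · simp only [hudef]
        rw [dif_pos hj, dif_pos hk]
        set i := hj.choose with hidef
        set i' := hk.choose with hidef'
        have hne : (i : Fin M) ≠ (i' : Fin M) := by
          intro hc
          apply hjk
          rw [← hj.choose_spec, ← hk.choose_spec, ← hidef, ← hidef', Subtype.ext hc]
        have : ∑ a, (z (i : Fin M) a / Real.sqrt (d i)) * (z (i' : Fin M) a / Real.sqrt (d i'))
            = (∑ a, z (i : Fin M) a * z (i' : Fin M) a) / (Real.sqrt (d i) * Real.sqrt (d i')) := by
          rw [Finset.sum_div]
          exact Finset.sum_congr rfl fun a _ => div_mul_div_comm _ _ _ _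
        rw [this, hzz, if_neg hne, mul_zero, zero_div]
      · simp [hudef, dif_neg hk]
    · simp [hudef, dif_neg hj]
  · -- v orthogonality
    intro j k hjk
    by_cases hj : p j
    · by_cases hk : p k
      · simp only [hvdef]
        rw [dif_pos hj, dif_pos hk]
        set i := hj.choose with hidef
        set i' := hk.choose with hidef'
        have hne : (i : Fin M) ≠ (i' : Fin M) := by
          intro hc
          apply hjk
          rw [← hj.choose_spec, ← hk.choose_spec, ← hidef, ← hidef', Subtype.ext hc]
        rw [horth, if_neg hne]
      · simp [hvdef, dif_neg hk]
    · simp [hvdef, dif_neg hj]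
  · -- decomposition
    intro a b
    rw [hdecomp a b]
    have h1 : ∑ k, σ k * u k a * v k b = ∑ i : {i // d i ≠ 0}, z (i : Fin M) a * w (i : Fin M) b := by
      rw [hsum_reindex (fun k => σ k * u k a * v k b)
        (fun k hk => by simp [hσdef, dif_neg hk])]
      refine Fintype.sum_congr _ _ fun i => ?_
      simp only [hσdef, hudef, hvdef]
      rw [dif_pos (hpe i), dif_pos (hpe i), dif_pos (hpe i), hval i]
      rw [mul_comm (Real.sqrt (d (i : Fin M)))
        (z ((i : {i // d i ≠ 0}) : Fin M) a / Real.sqrt (d (i : Fin M))),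
        div_mul_cancel₀ _ (hsqrt_ne i)]
    have h2 : ∑ i : {i // d i ≠ 0}, z (i : Fin M) a * w (i : Fin M) b
        = ∑ i, z i a * w i b := by
      rw [hsubsum (fun i => z i a * w i b)]
      refine Finset.sum_subset (Finset.filter_subset _ _) ?_
      intro i _ hi
      have : d i = 0 := by
        by_contra hc
        exact hi (Finset.mem_filter.mpr ⟨Finset.mem_univ i, hc⟩)
      rw [hz0 i this a, zero_mul]
    rw [h1, h2]

end SvdAux
section MainAux
open Finset

/-- Convert a Euclidean norm bound into a sum-of-squares bound. -/
lemma sumle {n : ℕ} (x : EuclideanSpace ℝ (Fin n)) (r : ℝ) (hr : 0 ≤ r) (h : ‖x‖ ≤ r) :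
    ∑ i, x i ^ 2 ≤ r ^ 2 := by
  rw [EuclideanSpace.norm_eq] at h
  have h2 : ∑ i, ‖x i‖ ^ 2 = ∑ i, x i ^ 2 :=
    Finset.sum_congr rfl fun i _ => by rw [Real.norm_eq_abs, sq_abs]
  have h0 : (0:ℝ) ≤ ∑ i, ‖x i‖ ^ 2 := Finset.sum_nonneg fun i _ => sq_nonneg _
  have h3 := Real.sq_sqrt h0
  have h4 := Real.sqrt_nonneg (∑ i, ‖x i‖ ^ 2)
  nlinarith

/-- Convert a sum-of-squares bound into a Euclidean norm bound. -/
lemma normle {n : ℕ} (x : EuclideanSpace ℝ (Fin n)) (r : ℝ) (hr : 0 ≤ r)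
    (h : ∑ i, x i ^ 2 ≤ r ^ 2) : ‖x‖ ≤ r := by
  rw [EuclideanSpace.norm_eq]
  have h2 : ∑ i, ‖x i‖ ^ 2 = ∑ i, x i ^ 2 :=
    Finset.sum_congr rfl fun i _ => by rw [Real.norm_eq_abs, sq_abs]
  rw [h2]
  calc Real.sqrt (∑ i, x i ^ 2) ≤ Real.sqrt (r ^ 2) := Real.sqrt_le_sqrt h
    _ = r := Real.sqrt_sq hr

end MainAux

set_option maxHeartbeats 2000000 in
/-- Covering number bound for the set `S` of `N × M` matrices of rank at most `R` and
Frobenius norm at most `1`: for `0 < ε ≤ 1` there is an `ε`-net `S^ε` of `S` in the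
Frobenius norm with `|S^ε| ≤ (9/ε)^{(N+M+1)R}`. -/
theorem low_rank_unit_ball_covering
    (N M R : ℕ) (hN : 1 ≤ N) (hM : 1 ≤ M) (hR : 1 ≤ R)
    (ε : ℝ) (hε0 : 0 < ε) (hε1 : ε ≤ 1) :
    ∃ Sε : Finset (Matrix (Fin N) (Fin M) ℝ),
      (Sε.card : ℝ) ≤ (9 / ε) ^ ((N + M + 1) * R) ∧
      ∀ Θ : Matrix (Fin N) (Fin M) ℝ, Θ.rank ≤ R → frobNorm Θ ≤ 1 →
        ∃ Θ' ∈ Sε, frobNorm (Θ - Θ') ≤ ε := by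
  classical
  set δ : ℝ := ε / 3 with hδdef
  have hδ0 : (0:ℝ) < δ := by rw [hδdef]; linarith
  have hδ1 : δ ≤ 1 := by rw [hδdef]; linarith
  -- the three nets
  obtain ⟨Fσ, hFσT, hFσcard, hFσnet⟩ := exists_net (E := EuclideanSpace ℝ (Fin R)) hδ0 hδ1
    {x | ‖x‖ ≤ 1} (fun x hx => hx)
  set TU : Set (Fin R → EuclideanSpace ℝ (Fin N)) :=
    {U | (∀ k, ‖U k‖ ≤ 1) ∧ ∀ j k : Fin R, j ≠ k → ∑ a, U j a * U k a = 0} with hTUdef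
  have hTUball : ∀ U ∈ TU, ‖U‖ ≤ 1 := fun U hU =>
    (pi_norm_le_iff_of_nonneg zero_le_one).mpr hU.1
  obtain ⟨FU, hFUT, hFUcard, hFUnet⟩ := exists_net hδ0 hδ1 TU hTUball
  set TV : Set (Fin R → EuclideanSpace ℝ (Fin M)) :=
    {V | (∀ k, ‖V k‖ ≤ 1) ∧ ∀ j k : Fin R, j ≠ k → ∑ b, V j b * V k b = 0} with hTVdef
  have hTVball : ∀ V ∈ TV, ‖V‖ ≤ 1 := fun V hV =>
    (pi_norm_le_iff_of_nonneg zero_le_one).mpr hV.1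
  obtain ⟨FV, hFVT, hFVcard, hFVnet⟩ := exists_net hδ0 hδ1 TV hTVball
  -- dimension computations
  have hdimσ : Module.finrank ℝ (EuclideanSpace ℝ (Fin R)) = R := finrank_euclideanSpace_fin
  have hdimU : Module.finrank ℝ (Fin R → EuclideanSpace ℝ (Fin N)) = R * N := by
    simp [Module.finrank_pi_fintype, finrank_euclideanSpace_fin, Finset.sum_const]
  have hdimV : Module.finrank ℝ (Fin R → EuclideanSpace ℝ (Fin M)) = R * M := by
    simp [Module.finrank_pi_fintype, finrank_euclideanSpace_fin, Finset.sum_const]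
  rw [hdimσ] at hFσcard
  rw [hdimU] at hFUcard
  rw [hdimV] at hFVcard
  have h3δ : (3:ℝ) / δ = 9 / ε := by
    rw [hδdef]; field_simp; ring
  -- the image finset
  set Φ : (EuclideanSpace ℝ (Fin R)) × (Fin R → EuclideanSpace ℝ (Fin N)) ×
      (Fin R → EuclideanSpace ℝ (Fin M)) → Matrix (Fin N) (Fin M) ℝ :=
    fun q => (fun a b => ∑ k, q.1 k * q.2.1 k a * q.2.2 k b) with hΦdef
  refine ⟨(Fσ ×ˢ FU ×ˢ FV).image Φ, ?_, ?_⟩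
  · -- cardinality
    have h90 : (0:ℝ) ≤ 9 / ε := by positivity
    calc (((Fσ ×ˢ FU ×ˢ FV).image Φ).card : ℝ)
        ≤ ((Fσ ×ˢ FU ×ˢ FV).card : ℝ) := Nat.cast_le.mpr Finset.card_image_le
      _ = (Fσ.card : ℝ) * ((FU.card : ℝ) * (FV.card : ℝ)) := by
          rw [Finset.card_product, Finset.card_product]; push_cast; ring
      _ ≤ (9/ε) ^ R * ((9/ε) ^ (R*N) * ((9/ε) ^ (R*M))) := by
          rw [h3δ] at hFσcard hFUcard hFVcard
          have h1 : (0:ℝ) ≤ (FU.card : ℝ) := Nat.cast_nonneg _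
          have h2 : (0:ℝ) ≤ (FV.card : ℝ) := Nat.cast_nonneg _
          refine mul_le_mul hFσcard ?_ (by positivity) (by positivity)
          exact mul_le_mul hFUcard hFVcard (by positivity) (by positivity)
      _ = (9 / ε) ^ ((N + M + 1) * R) := by
          rw [← pow_add, ← pow_add]; congr 1; ring
  · -- covering property
    intro Θ hrank hfrob
    have hfrob' : ∑ t, ∑ b, Θ t b ^ 2 ≤ 1 := by
      have h0 : (0:ℝ) ≤ ∑ t, ∑ b, Θ t b ^ 2 :=
        Finset.sum_nonneg fun t _ => Finset.sum_nonneg fun b _ => sq_nonneg _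
      rw [frobNorm] at hfrob
      have h3 := Real.sq_sqrt h0
      have h4 := Real.sqrt_nonneg (∑ t, ∑ b, Θ t b ^ 2)
      nlinarith
    obtain ⟨σ, u, v, hσ1, hu1, hv1, huo, hvo, hdec⟩ := exists_svd Θ hrank hfrob'
    -- Euclidean packaging
    set xσ : EuclideanSpace ℝ (Fin R) := (WithLp.equiv 2 (Fin R → ℝ)).symm σ with hxσdef
    set xU : Fin R → EuclideanSpace ℝ (Fin N) :=
      fun k => (WithLp.equiv 2 (Fin N → ℝ)).symm (u k) with hxUdef
    set xV : Fin R → EuclideanSpace ℝ (Fin M) :=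
      fun k => (WithLp.equiv 2 (Fin M → ℝ)).symm (v k) with hxVdef
    have hxσmem : xσ ∈ {x : EuclideanSpace ℝ (Fin R) | ‖x‖ ≤ 1} :=
      normle xσ 1 zero_le_one (by rw [one_pow]; exact hσ1)
    have hxUmem : xU ∈ TU := ⟨fun k => normle (xU k) 1 zero_le_one (by rw [one_pow]; exact hu1 k),
      fun j k hjk => huo j k hjk⟩
    have hxVmem : xV ∈ TV := ⟨fun k => normle (xV k) 1 zero_le_one (by rw [one_pow]; exact hv1 k),
      fun j k hjk => hvo j k hjk⟩
    obtain ⟨sb, hsbF, hsbnear⟩ := hFσnet xσ hxσmem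
    obtain ⟨Ub, hUbF, hUbnear⟩ := hFUnet xU hxUmem
    obtain ⟨Vb, hVbF, hVbnear⟩ := hFVnet xV hxVmem
    have hsbT : ‖sb‖ ≤ 1 := hFσT hsbF
    have hUbT := hFUT hUbF
    have hVbT := hFVT hVbF
    -- sum-form facts about the approximants
    have hsb1 : ∑ k, sb k ^ 2 ≤ 1 := by
      have := sumle sb 1 zero_le_one hsbT; rwa [one_pow] at this
    have hUb1 : ∀ k, ∑ a, Ub k a ^ 2 ≤ 1 := fun k => by
      have := sumle (Ub k) 1 zero_le_one (hUbT.1 k); rwa [one_pow] at this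
    have hVb1 : ∀ k, ∑ b, Vb k b ^ 2 ≤ 1 := fun k => by
      have := sumle (Vb k) 1 zero_le_one (hVbT.1 k); rwa [one_pow] at this
    have hUbo : ∀ j k : Fin R, j ≠ k → ∑ a, Ub j a * Ub k a = 0 := hUbT.2
    have hsd : ∑ k, (σ k - sb k) ^ 2 ≤ δ ^ 2 := sumle (xσ - sb) δ hδ0.le hsbnear
    have hUd : ∀ k, ∑ a, (u k a - Ub k a) ^ 2 ≤ δ ^ 2 := fun k =>
      sumle (xU k - Ub k) δ hδ0.le
        (le_trans (norm_le_pi_norm (xU - Ub) k) hUbnear)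
    have hVd : ∀ k, ∑ b, (v k b - Vb k b) ^ 2 ≤ δ ^ 2 := fun k =>
      sumle (xV k - Vb k) δ hδ0.le
        (le_trans (norm_le_pi_norm (xV - Vb) k) hVbnear)
    -- the approximating matrix
    refine ⟨Φ (sb, Ub, Vb), Finset.mem_image_of_mem Φ
      (Finset.mem_product.mpr ⟨hsbF, Finset.mem_product.mpr ⟨hUbF, hVbF⟩⟩), ?_⟩
    set M1 : Matrix (Fin N) (Fin M) ℝ := fun a b => ∑ k, (σ k - sb k) * u k a * v k b with hM1def
    set M2 : Matrix (Fin N) (Fin M) ℝ :=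
      fun a b => ∑ k, sb k * (u k a - Ub k a) * v k b with hM2def
    set M3 : Matrix (Fin N) (Fin M) ℝ :=
      fun a b => ∑ k, sb k * Ub k a * (v k b - Vb k b) with hM3def
    have hsplit : Θ - Φ (sb, Ub, Vb) = M1 + (M2 + M3) := by
      funext a b
      show Θ a b - (∑ k, sb k * Ub k a * Vb k b) = M1 a b + (M2 a b + M3 a b)
      rw [hdec a b]
      show _ = (∑ k, (σ k - sb k) * u k a * v k b) +
        ((∑ k, sb k * (u k a - Ub k a) * v k b) + (∑ k, sb k * Ub k a * (v k b - Vb k b)))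
      rw [← Finset.sum_sub_distrib, ← Finset.sum_add_distrib, ← Finset.sum_add_distrib]
      exact Finset.sum_congr rfl fun k _ => by ring
    have sum_sq_nonneg : ∀ {n : ℕ} (f : Fin n → ℝ), (0:ℝ) ≤ ∑ i, f i ^ 2 :=
      fun f => Finset.sum_nonneg fun i _ => sq_nonneg _
    have hM1 : frobNorm M1 ≤ δ := by
      have h1 : ∑ a, ∑ b, M1 a b ^ 2
          = ∑ k, (σ k - sb k) ^ 2 * ((∑ a, u k a ^ 2) * (∑ b, v k b ^ 2)) :=
        expand_sq (fun k => σ k - sb k) u v (fun j k hjk => by rw [hvo j k hjk, mul_zero])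
      have h2 : ∑ k, (σ k - sb k) ^ 2 * ((∑ a, u k a ^ 2) * (∑ b, v k b ^ 2)) ≤ δ ^ 2 := by
        refine le_trans (Finset.sum_le_sum fun k _ => ?_) hsd
        have hXY : (∑ a, u k a ^ 2) * (∑ b, v k b ^ 2) ≤ 1 := by
          have := mul_le_mul (hu1 k) (hv1 k) (sum_sq_nonneg (v k)) zero_le_one
          linarith
        calc (σ k - sb k) ^ 2 * ((∑ a, u k a ^ 2) * (∑ b, v k b ^ 2))
            ≤ (σ k - sb k) ^ 2 * 1 := mul_le_mul_of_nonneg_left hXY (sq_nonneg _)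
          _ = (σ k - sb k) ^ 2 := mul_one _
      calc frobNorm M1 = Real.sqrt (∑ a, ∑ b, M1 a b ^ 2) := rfl
        _ ≤ Real.sqrt (δ ^ 2) := Real.sqrt_le_sqrt (h1 ▸ h2)
        _ = δ := Real.sqrt_sq hδ0.le
    have hM2 : frobNorm M2 ≤ δ := by
      have h1 : ∑ a, ∑ b, M2 a b ^ 2
          = ∑ k, sb k ^ 2 * ((∑ a, (u k a - Ub k a) ^ 2) * (∑ b, v k b ^ 2)) :=
        expand_sq sb (fun k a => u k a - Ub k a) v
          (fun j k hjk => by rw [hvo j k hjk, mul_zero])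
      have h2 : ∑ k, sb k ^ 2 * ((∑ a, (u k a - Ub k a) ^ 2) * (∑ b, v k b ^ 2)) ≤ δ ^ 2 := by
        have step : ∑ k, sb k ^ 2 * ((∑ a, (u k a - Ub k a) ^ 2) * (∑ b, v k b ^ 2))
            ≤ ∑ k, sb k ^ 2 * δ ^ 2 := by
          refine Finset.sum_le_sum fun k _ => ?_
          have hXY : (∑ a, (u k a - Ub k a) ^ 2) * (∑ b, v k b ^ 2) ≤ δ ^ 2 := by
            have h5 : (∑ a, (u k a - Ub k a) ^ 2) * (∑ b, v k b ^ 2)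
                ≤ (∑ a, (u k a - Ub k a) ^ 2) * 1 :=
              mul_le_mul_of_nonneg_left (hv1 k) (sum_sq_nonneg _)
            have h6 := hUd k
            linarith
          exact mul_le_mul_of_nonneg_left hXY (sq_nonneg _)
        refine le_trans step ?_
        rw [← Finset.sum_mul]
        have := mul_le_mul_of_nonneg_right hsb1 (sq_nonneg δ)
        linarith
      calc frobNorm M2 = Real.sqrt (∑ a, ∑ b, M2 a b ^ 2) := rfl
        _ ≤ Real.sqrt (δ ^ 2) := Real.sqrt_le_sqrt (h1 ▸ h2)
        _ = δ := Real.sqrt_sq hδ0.le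
    have hM3 : frobNorm M3 ≤ δ := by
      have h1 : ∑ a, ∑ b, M3 a b ^ 2
          = ∑ k, sb k ^ 2 * ((∑ a, Ub k a ^ 2) * (∑ b, (v k b - Vb k b) ^ 2)) :=
        expand_sq sb (fun k a => Ub k a) (fun k b => v k b - Vb k b)
          (fun j k hjk => by rw [hUbo j k hjk, zero_mul])
      have h2 : ∑ k, sb k ^ 2 * ((∑ a, Ub k a ^ 2) * (∑ b, (v k b - Vb k b) ^ 2)) ≤ δ ^ 2 := by
        have step : ∑ k, sb k ^ 2 * ((∑ a, Ub k a ^ 2) * (∑ b, (v k b - Vb k b) ^ 2))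
            ≤ ∑ k, sb k ^ 2 * δ ^ 2 := by
          refine Finset.sum_le_sum fun k _ => ?_
          have hXY : (∑ a, Ub k a ^ 2) * (∑ b, (v k b - Vb k b) ^ 2) ≤ δ ^ 2 := by
            have h5 : (∑ a, Ub k a ^ 2) * (∑ b, (v k b - Vb k b) ^ 2)
                ≤ 1 * (∑ b, (v k b - Vb k b) ^ 2) :=
              mul_le_mul_of_nonneg_right (hUb1 k) (sum_sq_nonneg _)
            have h6 := hVd k
            linarith
          exact mul_le_mul_of_nonneg_left hXY (sq_nonneg _)
        refine le_trans step ?_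
        rw [← Finset.sum_mul]
        have := mul_le_mul_of_nonneg_right hsb1 (sq_nonneg δ)
        linarith
      calc frobNorm M3 = Real.sqrt (∑ a, ∑ b, M3 a b ^ 2) := rfl
        _ ≤ Real.sqrt (δ ^ 2) := Real.sqrt_le_sqrt (h1 ▸ h2)
        _ = δ := Real.sqrt_sq hδ0.le
    calc frobNorm (Θ - Φ (sb, Ub, Vb)) = frobNorm (M1 + (M2 + M3)) := by rw [hsplit]
      _ ≤ frobNorm M1 + frobNorm (M2 + M3) := frobNorm_tri _ _
      _ ≤ frobNorm M1 + (frobNorm M2 + frobNorm M3) :=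
          add_le_add (le_refl _) (frobNorm_tri _ _)
      _ ≤ δ + (δ + δ) := add_le_add hM1 (add_le_add hM2 hM3)
      _ = ε := by rw [hδdef]; ring
end
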